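/- arXiv:2505.02962 — 3 statements merged into one kernel-verified Lean document; each statement's English description precedes it below -/
import Mathlib

section
/- Let I ⊆ ℝ be an open interval, ρ : I → ℝ smooth and nowhere zero, and ζ : I → ℝ smooth with ζ'(t) = 2(ρ(t)³ − 1)/ρ(t)³ for all t ∈ I. Let w : ℝ² → ℝ be a smooth solution of the reduced equation. Then the function u(t,x,y) := w(ζ(t), y/ρ(t) − x) − (ρ'(t)/(6ρ(t)))·y³ is a smooth solution of the dispersionless Nyzhnyk equation on I × ℝ². -/
/-- First-coordinate partial derivative of a function on `ℝ²`. -/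
noncomputable def d1 (f : ℝ × ℝ → ℝ) (p : ℝ × ℝ) : ℝ := deriv (fun s => f (s, p.2)) p.1

/-- Second-coordinate partial derivative of a function on `ℝ²`. -/
noncomputable def d2 (f : ℝ × ℝ → ℝ) (p : ℝ × ℝ) : ℝ := deriv (fun s => f (p.1, s)) p.2

/-- `w` is a smooth solution of the reduced equation `∂₁∂₂²w + (∂₂²w)·(∂₂³w) = 0` on `U`. -/
def IsRedSolOn (w : ℝ × ℝ → ℝ) (U : Set (ℝ × ℝ)) : Prop :=
  ContDiffOn ℝ (⊤ : ℕ∞) w U ∧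
    ∀ p ∈ U, d1 (d2 (d2 w)) p + d2 (d2 w) p * d2 (d2 (d2 w)) p = 0

/-- `h` is a smooth solution of the inviscid Burgers equation `∂₁h + h·∂₂h = 0` on `U`. -/
def IsBurgersSolOn (h : ℝ × ℝ → ℝ) (U : Set (ℝ × ℝ)) : Prop :=
  ContDiffOn ℝ (⊤ : ℕ∞) h U ∧ ∀ p ∈ U, d1 h p + h p * d2 h p = 0

/-- Partial derivative with respect to `t` of a function on `ℝ³ = ℝ_t × ℝ_x × ℝ_y`. -/
noncomputable def Dt (f : ℝ × ℝ × ℝ → ℝ) (p : ℝ × ℝ × ℝ) : ℝ :=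
  deriv (fun s => f (s, p.2.1, p.2.2)) p.1

/-- Partial derivative with respect to `x`. -/
noncomputable def Dx (f : ℝ × ℝ × ℝ → ℝ) (p : ℝ × ℝ × ℝ) : ℝ :=
  deriv (fun s => f (p.1, s, p.2.2)) p.2.1

/-- Partial derivative with respect to `y`. -/
noncomputable def Dy (f : ℝ × ℝ × ℝ → ℝ) (p : ℝ × ℝ × ℝ) : ℝ :=
  deriv (fun s => f (p.1, p.2.1, s)) p.2.2

/-- `u` is a smooth solution of the dispersionless Nyzhnyk equation
`u_txy = (u_xx·u_xy)_x + (u_xy·u_yy)_y` on `D`. -/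
def IsDNSolOn (u : ℝ × ℝ × ℝ → ℝ) (D : Set (ℝ × ℝ × ℝ)) : Prop :=
  ContDiffOn ℝ (⊤ : ℕ∞) u D ∧
    ∀ p ∈ D, Dt (Dx (Dy u)) p =
      Dx (fun q => Dx (Dx u) q * Dx (Dy u) q) p +
        Dy (fun q => Dx (Dy u) q * Dy (Dy u) q) p

private lemma d1_eq_fderiv (f : ℝ × ℝ → ℝ) (p : ℝ × ℝ) (hf : DifferentiableAt ℝ f p) :
    d1 f p = fderiv ℝ f p (1, 0) := by
  have h : HasDerivAt (fun s : ℝ => (s, p.2)) ((1:ℝ), (0:ℝ)) p.1 :=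
    (hasDerivAt_id p.1).prodMk (hasDerivAt_const p.1 p.2)
  simpa [d1, Function.comp_def] using (hf.hasFDerivAt.comp_hasDerivAt p.1 h).deriv

private lemma d2_eq_fderiv (f : ℝ × ℝ → ℝ) (p : ℝ × ℝ) (hf : DifferentiableAt ℝ f p) :
    d2 f p = fderiv ℝ f p (0, 1) := by
  have h : HasDerivAt (fun s : ℝ => (p.1, s)) ((0:ℝ), (1:ℝ)) p.2 :=
    (hasDerivAt_const p.2 p.1).prodMk (hasDerivAt_id p.2)
  simpa [d2, Function.comp_def] using (hf.hasFDerivAt.comp_hasDerivAt p.2 h).deriv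

private lemma contDiff_d1 (f : ℝ × ℝ → ℝ) (hf : ContDiff ℝ (⊤:ℕ∞) f) : ContDiff ℝ (⊤:ℕ∞) (d1 f) := by
  have he : d1 f = fun p => fderiv ℝ f p (1, 0) :=
    funext fun p => d1_eq_fderiv f p (hf.differentiable (by simp) p)
  rw [he]
  exact (hf.fderiv_right (by exact_mod_cast le_top)).clm_apply contDiff_const

private lemma contDiff_d2 (f : ℝ × ℝ → ℝ) (hf : ContDiff ℝ (⊤:ℕ∞) f) : ContDiff ℝ (⊤:ℕ∞) (d2 f) := by
  have he : d2 f = fun p => fderiv ℝ f p (0, 1) :=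
    funext fun p => d2_eq_fderiv f p (hf.differentiable (by simp) p)
  rw [he]
  exact (hf.fderiv_right (by exact_mod_cast le_top)).clm_apply contDiff_const

private lemma comp2 (f : ℝ × ℝ → ℝ) (hf : ContDiff ℝ (⊤:ℕ∞) f) {γ : ℝ → ℝ × ℝ} {a b s : ℝ}
    (hγ : HasDerivAt γ (a, b) s) :
    HasDerivAt (fun r => f (γ r)) (a * d1 f (γ s) + b * d2 f (γ s)) s := by
  have hd : DifferentiableAt ℝ f (γ s) := hf.differentiable (by simp) (γ s)
  have h := hd.hasFDerivAt.comp_hasDerivAt s hγ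
  have e : fderiv ℝ f (γ s) (a, b) = a * d1 f (γ s) + b * d2 f (γ s) := by
    rw [d1_eq_fderiv f _ hd, d2_eq_fderiv f _ hd]
    have h2 : (a, b) = a • ((1:ℝ), (0:ℝ)) + b • ((0:ℝ), (1:ℝ)) := by
      simp [Prod.ext_iff]
    rw [h2, map_add, (fderiv ℝ f (γ s)).map_smul, (fderiv ℝ f (γ s)).map_smul]
    simp [smul_eq_mul]
  rw [← e]; exact h

/-- If `ρ` is smooth and nowhere zero on an open interval `I`,
`ζ' = 2(ρ³−1)/ρ³` on `I`, and `w` is a smooth solution of the reduced equation on `ℝ²`,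
then `u(t,x,y) = w(ζ(t), y/ρ(t) − x) − (ρ'(t)/(6ρ(t)))·y³` is a smooth solution of the
dispersionless Nyzhnyk equation on `I × ℝ²`. -/
theorem statement1 (I : Set ℝ) (hIopen : IsOpen I) (hIint : I.OrdConnected)
    (ρ ζ : ℝ → ℝ) (hρ : ContDiffOn ℝ (⊤ : ℕ∞) ρ I) (hρ0 : ∀ t ∈ I, ρ t ≠ 0)
    (hζ : ContDiffOn ℝ (⊤ : ℕ∞) ζ I)
    (hζ' : ∀ t ∈ I, deriv ζ t = 2 * (ρ t ^ 3 - 1) / ρ t ^ 3)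
    (w : ℝ × ℝ → ℝ) (hw : ContDiff ℝ (⊤ : ℕ∞) w)
    (hweq : ∀ p, d1 (d2 (d2 w)) p + d2 (d2 w) p * d2 (d2 (d2 w)) p = 0)
    (u : ℝ × ℝ × ℝ → ℝ)
    (hu : ∀ t x y, u (t, x, y) =
      w (ζ t, y / ρ t - x) - deriv ρ t / (6 * ρ t) * y ^ 3) :
    IsDNSolOn u {p : ℝ × ℝ × ℝ | p.1 ∈ I} := by
  have hw2 : ContDiff ℝ (⊤:ℕ∞) (d2 w) := contDiff_d2 w hw
  have hA : ContDiff ℝ (⊤:ℕ∞) (d2 (d2 w)) := contDiff_d2 _ hw2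
  -- Dy u formula
  have hDyu : ∀ t x y : ℝ, Dy u (t, x, y) =
      (ρ t)⁻¹ * d2 w (ζ t, y / ρ t - x) - deriv ρ t / (6 * ρ t) * (3 * y ^ 2) := by
    intro t x y
    have hfun : (fun s => u (t, x, s)) =
        fun s => w (ζ t, s / ρ t - x) - deriv ρ t / (6 * ρ t) * s ^ 3 :=
      funext fun s => hu t x s
    have hγ : HasDerivAt (fun s : ℝ => ((ζ t : ℝ), s / ρ t - x)) ((0:ℝ), 1 / ρ t) y :=
      (hasDerivAt_const y (ζ t)).prodMk (((hasDerivAt_id y).div_const (ρ t)).sub_const x)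
    have h1 : HasDerivAt (fun s : ℝ => w (ζ t, s / ρ t - x))
        (0 * d1 w (ζ t, y / ρ t - x) + 1 / ρ t * d2 w (ζ t, y / ρ t - x)) y := comp2 w hw hγ
    have h2 : HasDerivAt (fun s : ℝ => deriv ρ t / (6 * ρ t) * s ^ 3)
        (deriv ρ t / (6 * ρ t) * (3 * y ^ 2)) y := by
      simpa using (hasDerivAt_pow 3 y).const_mul (deriv ρ t / (6 * ρ t))
    have h3 : HasDerivAt (fun s : ℝ => w (ζ t, s / ρ t - x) - deriv ρ t / (6 * ρ t) * s ^ 3)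
        ((0 * d1 w (ζ t, y / ρ t - x) + 1 / ρ t * d2 w (ζ t, y / ρ t - x))
          - deriv ρ t / (6 * ρ t) * (3 * y ^ 2)) y := h1.sub h2
    rw [show Dy u (t, x, y) = deriv (fun s => u (t, x, s)) y from rfl, hfun, h3.deriv]
    ring
  -- Dx u formula
  have hDxu : ∀ t x y : ℝ, Dx u (t, x, y) = -(d2 w (ζ t, y / ρ t - x)) := by
    intro t x y
    have hfun : (fun s => u (t, s, y)) =
        fun s => w (ζ t, y / ρ t - s) - deriv ρ t / (6 * ρ t) * y ^ 3 :=
      funext fun s => hu t s y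
    have hγ : HasDerivAt (fun s : ℝ => ((ζ t : ℝ), y / ρ t - s)) ((0:ℝ), (-1:ℝ)) x :=
      (hasDerivAt_const x (ζ t)).prodMk (HasDerivAt.const_sub (y / ρ t) (hasDerivAt_id x))
    have h1 : HasDerivAt (fun s : ℝ => w (ζ t, y / ρ t - s))
        (0 * d1 w (ζ t, y / ρ t - x) + (-1) * d2 w (ζ t, y / ρ t - x)) x := comp2 w hw hγ
    have h3 : HasDerivAt (fun s : ℝ => w (ζ t, y / ρ t - s) - deriv ρ t / (6 * ρ t) * y ^ 3)
        (0 * d1 w (ζ t, y / ρ t - x) + (-1) * d2 w (ζ t, y / ρ t - x)) x :=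
      h1.sub_const _
    rw [show Dx u (t, x, y) = deriv (fun s => u (t, s, y)) x from rfl, hfun, h3.deriv]
    ring
  -- second derivatives (valid everywhere)
  have hXY : ∀ t x y : ℝ, Dx (Dy u) (t, x, y) =
      -((ρ t)⁻¹ * d2 (d2 w) (ζ t, y / ρ t - x)) := by
    intro t x y
    have hfun : (fun s => Dy u (t, s, y)) = fun s =>
        (ρ t)⁻¹ * d2 w (ζ t, y / ρ t - s) - deriv ρ t / (6 * ρ t) * (3 * y ^ 2) :=
      funext fun s => hDyu t s y
    have hγ : HasDerivAt (fun s : ℝ => ((ζ t : ℝ), y / ρ t - s)) ((0:ℝ), (-1:ℝ)) x :=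
      (hasDerivAt_const x (ζ t)).prodMk (HasDerivAt.const_sub (y / ρ t) (hasDerivAt_id x))
    have h1 : HasDerivAt (fun s : ℝ => d2 w (ζ t, y / ρ t - s))
        (0 * d1 (d2 w) (ζ t, y / ρ t - x) + (-1) * d2 (d2 w) (ζ t, y / ρ t - x)) x :=
      comp2 (d2 w) hw2 hγ
    have h3 : HasDerivAt (fun s : ℝ =>
        (ρ t)⁻¹ * d2 w (ζ t, y / ρ t - s) - deriv ρ t / (6 * ρ t) * (3 * y ^ 2))
        ((ρ t)⁻¹ * (0 * d1 (d2 w) (ζ t, y / ρ t - x) + (-1) * d2 (d2 w) (ζ t, y / ρ t - x))) x :=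
      (h1.const_mul _).sub_const _
    rw [show Dx (Dy u) (t, x, y) = deriv (fun s => Dy u (t, s, y)) x from rfl, hfun, h3.deriv]
    ring
  have hXX : ∀ t x y : ℝ, Dx (Dx u) (t, x, y) = d2 (d2 w) (ζ t, y / ρ t - x) := by
    intro t x y
    have hfun : (fun s => Dx u (t, s, y)) = fun s => -(d2 w (ζ t, y / ρ t - s)) :=
      funext fun s => hDxu t s y
    have hγ : HasDerivAt (fun s : ℝ => ((ζ t : ℝ), y / ρ t - s)) ((0:ℝ), (-1:ℝ)) x :=
      (hasDerivAt_const x (ζ t)).prodMk (HasDerivAt.const_sub (y / ρ t) (hasDerivAt_id x))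
    have h3 : HasDerivAt (fun s : ℝ => -(d2 w (ζ t, y / ρ t - s)))
        (-(0 * d1 (d2 w) (ζ t, y / ρ t - x) + (-1) * d2 (d2 w) (ζ t, y / ρ t - x))) x :=
      (comp2 (d2 w) hw2 hγ).neg
    rw [show Dx (Dx u) (t, x, y) = deriv (fun s => Dx u (t, s, y)) x from rfl, hfun, h3.deriv]
    ring
  have hYY : ∀ t x y : ℝ, Dy (Dy u) (t, x, y) =
      (ρ t)⁻¹ * ((ρ t)⁻¹ * d2 (d2 w) (ζ t, y / ρ t - x)) - deriv ρ t / (6 * ρ t) * (6 * y) := by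
    intro t x y
    have hfun : (fun s => Dy u (t, x, s)) = fun s =>
        (ρ t)⁻¹ * d2 w (ζ t, s / ρ t - x) - deriv ρ t / (6 * ρ t) * (3 * s ^ 2) :=
      funext fun s => hDyu t x s
    have hγ : HasDerivAt (fun s : ℝ => ((ζ t : ℝ), s / ρ t - x)) ((0:ℝ), 1 / ρ t) y :=
      (hasDerivAt_const y (ζ t)).prodMk (((hasDerivAt_id y).div_const (ρ t)).sub_const x)
    have h1 : HasDerivAt (fun s : ℝ => (ρ t)⁻¹ * d2 w (ζ t, s / ρ t - x))
        ((ρ t)⁻¹ * (0 * d1 (d2 w) (ζ t, y / ρ t - x) + 1 / ρ t * d2 (d2 w) (ζ t, y / ρ t - x))) y :=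
      (comp2 (d2 w) hw2 hγ).const_mul _
    have h2 : HasDerivAt (fun s : ℝ => deriv ρ t / (6 * ρ t) * (3 * s ^ 2))
        (deriv ρ t / (6 * ρ t) * (3 * (2 * y))) y := by
      have := ((hasDerivAt_pow 2 y).const_mul (3:ℝ)).const_mul (deriv ρ t / (6 * ρ t))
      exact this.congr_deriv (by norm_num)
    have h3 := h1.sub h2
    rw [show Dy (Dy u) (t, x, y) = deriv (fun s => Dy u (t, x, s)) y from rfl, hfun]; erw [h3.deriv]
    ring
  -- RHS terms
  have hR1 : ∀ t x y : ℝ, Dx (fun q => Dx (Dx u) q * Dx (Dy u) q) (t, x, y) =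
      2 * (ρ t)⁻¹ * d2 (d2 w) (ζ t, y / ρ t - x) * d2 (d2 (d2 w)) (ζ t, y / ρ t - x) := by
    intro t x y
    have hfun : (fun s => Dx (Dx u) (t, s, y) * Dx (Dy u) (t, s, y)) = fun s =>
        d2 (d2 w) (ζ t, y / ρ t - s) * -((ρ t)⁻¹ * d2 (d2 w) (ζ t, y / ρ t - s)) :=
      funext fun s => by rw [hXX t s y, hXY t s y]
    have hγ : HasDerivAt (fun s : ℝ => ((ζ t : ℝ), y / ρ t - s)) ((0:ℝ), (-1:ℝ)) x :=
      (hasDerivAt_const x (ζ t)).prodMk (HasDerivAt.const_sub (y / ρ t) (hasDerivAt_id x))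
    have h1 : HasDerivAt (fun s : ℝ => d2 (d2 w) (ζ t, y / ρ t - s))
        (0 * d1 (d2 (d2 w)) (ζ t, y / ρ t - x) + (-1) * d2 (d2 (d2 w)) (ζ t, y / ρ t - x)) x :=
      comp2 (d2 (d2 w)) hA hγ
    have h3 := h1.mul ((h1.const_mul ((ρ t)⁻¹)).neg)
    rw [show Dx (fun q => Dx (Dx u) q * Dx (Dy u) q) (t, x, y)
        = deriv (fun s => Dx (Dx u) (t, s, y) * Dx (Dy u) (t, s, y)) x from rfl, hfun]; erw [h3.deriv]; simp only [Pi.neg_apply]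
    ring
  have hR2 : ∀ t x y : ℝ, Dy (fun q => Dx (Dy u) q * Dy (Dy u) q) (t, x, y) =
      -(2 * ((ρ t)⁻¹)^4 * d2 (d2 w) (ζ t, y / ρ t - x) * d2 (d2 (d2 w)) (ζ t, y / ρ t - x))
      + deriv ρ t / (6 * ρ t) * (6 * y) * ((ρ t)⁻¹)^2 * d2 (d2 (d2 w)) (ζ t, y / ρ t - x)
      + deriv ρ t / (6 * ρ t) * 6 * (ρ t)⁻¹ * d2 (d2 w) (ζ t, y / ρ t - x) := by
    intro t x y
    have hfun : (fun s => Dx (Dy u) (t, x, s) * Dy (Dy u) (t, x, s)) = fun s =>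
        -((ρ t)⁻¹ * d2 (d2 w) (ζ t, s / ρ t - x)) *
          ((ρ t)⁻¹ * ((ρ t)⁻¹ * d2 (d2 w) (ζ t, s / ρ t - x)) - deriv ρ t / (6 * ρ t) * (6 * s)) :=
      funext fun s => by rw [hXY t x s, hYY t x s]
    have hγ : HasDerivAt (fun s : ℝ => ((ζ t : ℝ), s / ρ t - x)) ((0:ℝ), 1 / ρ t) y :=
      (hasDerivAt_const y (ζ t)).prodMk (((hasDerivAt_id y).div_const (ρ t)).sub_const x)
    have h1 : HasDerivAt (fun s : ℝ => d2 (d2 w) (ζ t, s / ρ t - x))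
        (0 * d1 (d2 (d2 w)) (ζ t, y / ρ t - x) + 1 / ρ t * d2 (d2 (d2 w)) (ζ t, y / ρ t - x)) y :=
      comp2 (d2 (d2 w)) hA hγ
    have h2 : HasDerivAt (fun s : ℝ => deriv ρ t / (6 * ρ t) * (6 * s))
        (deriv ρ t / (6 * ρ t) * (6 * 1)) y := ((hasDerivAt_id y).const_mul 6).const_mul _
    have h3 := ((h1.const_mul ((ρ t)⁻¹)).neg).mul
      (((h1.const_mul ((ρ t)⁻¹)).const_mul ((ρ t)⁻¹)).sub h2)
    rw [show Dy (fun q => Dx (Dy u) q * Dy (Dy u) q) (t, x, y)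
        = deriv (fun s => Dx (Dy u) (t, x, s) * Dy (Dy u) (t, x, s)) y from rfl, hfun]; erw [h3.deriv]; simp only [Pi.neg_apply, Pi.sub_apply]
    ring
  constructor
  · -- smoothness
    have hdρI : ContDiffOn ℝ (⊤:ℕ∞) (deriv ρ) I :=
      hρ.deriv_of_isOpen hIopen (by exact_mod_cast le_top)
    have hfst : ContDiffOn ℝ (⊤:ℕ∞) (fun p : ℝ × ℝ × ℝ => p.1) {p : ℝ × ℝ × ℝ | p.1 ∈ I} :=
      contDiff_fst.contDiffOn
    have hmaps : Set.MapsTo (fun p : ℝ × ℝ × ℝ => p.1) {p : ℝ × ℝ × ℝ | p.1 ∈ I} I :=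
      fun p hp => hp
    have hζc : ContDiffOn ℝ (⊤:ℕ∞) (fun p : ℝ × ℝ × ℝ => ζ p.1) {p : ℝ × ℝ × ℝ | p.1 ∈ I} :=
      hζ.comp hfst hmaps
    have hρc : ContDiffOn ℝ (⊤:ℕ∞) (fun p : ℝ × ℝ × ℝ => ρ p.1) {p : ℝ × ℝ × ℝ | p.1 ∈ I} :=
      hρ.comp hfst hmaps
    have hdρc : ContDiffOn ℝ (⊤:ℕ∞) (fun p : ℝ × ℝ × ℝ => deriv ρ p.1)
        {p : ℝ × ℝ × ℝ | p.1 ∈ I} := hdρI.comp hfst hmaps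
    have hρne : ∀ p ∈ {p : ℝ × ℝ × ℝ | p.1 ∈ I}, ρ p.1 ≠ 0 := fun p hp => hρ0 p.1 hp
    have hy3 : ContDiffOn ℝ (⊤:ℕ∞) (fun p : ℝ × ℝ × ℝ => p.2.2)
        {p : ℝ × ℝ × ℝ | p.1 ∈ I} := (contDiff_snd.comp contDiff_snd).contDiffOn
    have hyx : ContDiffOn ℝ (⊤:ℕ∞) (fun p : ℝ × ℝ × ℝ => p.2.2 / ρ p.1 - p.2.1)
        {p : ℝ × ℝ × ℝ | p.1 ∈ I} :=
      (hy3.div hρc hρne).sub (contDiff_fst.comp contDiff_snd).contDiffOn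
    have hwc : ContDiffOn ℝ (⊤:ℕ∞) (fun p : ℝ × ℝ × ℝ => w (ζ p.1, p.2.2 / ρ p.1 - p.2.1))
        {p : ℝ × ℝ × ℝ | p.1 ∈ I} := hw.comp_contDiffOn (hζc.prodMk hyx)
    have h6 : ∀ p ∈ {p : ℝ × ℝ × ℝ | p.1 ∈ I}, (6:ℝ) * ρ p.1 ≠ 0 :=
      fun p hp => mul_ne_zero (by norm_num) (hρ0 p.1 hp)
    have hcc : ContDiffOn ℝ (⊤:ℕ∞)
        (fun p : ℝ × ℝ × ℝ => deriv ρ p.1 / (6 * ρ p.1) * p.2.2 ^ 3)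
        {p : ℝ × ℝ × ℝ | p.1 ∈ I} :=
      (hdρc.div (contDiffOn_const.mul hρc) h6).mul (hy3.pow 3)
    exact (hwc.sub hcc).congr fun p hp => by obtain ⟨t, x, y⟩ := p; exact hu t x y
  · rintro ⟨t, x, y⟩ hp
    have ht : t ∈ I := hp
    have hne : ρ t ≠ 0 := hρ0 t ht
    have hρt : HasDerivAt ρ (deriv ρ t) t :=
      ((hρ.contDiffAt (hIopen.mem_nhds ht)).differentiableAt
        (by simp)).hasDerivAt
    have hζt : HasDerivAt ζ (deriv ζ t) t :=
      ((hζ.contDiffAt (hIopen.mem_nhds ht)).differentiableAt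
        (by simp)).hasDerivAt
    have hγ : HasDerivAt (fun s : ℝ => (ζ s, y / ρ s - x))
        (deriv ζ t, (0 * ρ t - y * deriv ρ t) / ρ t ^ 2) t :=
      hζt.prodMk (((hasDerivAt_const t y).div hρt hne).sub_const x)
    have h1 : HasDerivAt (fun s : ℝ => d2 (d2 w) (ζ s, y / ρ s - x))
        (deriv ζ t * d1 (d2 (d2 w)) (ζ t, y / ρ t - x)
          + (0 * ρ t - y * deriv ρ t) / ρ t ^ 2 * d2 (d2 (d2 w)) (ζ t, y / ρ t - x)) t :=
      comp2 (d2 (d2 w)) hA hγ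
    have hinv : HasDerivAt (fun s : ℝ => (ρ s)⁻¹) (-deriv ρ t / ρ t ^ 2) t := hρt.inv hne
    have h3 := (hinv.mul h1).neg
    have hfun : (fun s => Dx (Dy u) (s, x, y)) =
        fun s => -((ρ s)⁻¹ * d2 (d2 w) (ζ s, y / ρ s - x)) :=
      funext fun s => hXY s x y
    have hL : Dt (Dx (Dy u)) (t, x, y) =
        -((-deriv ρ t / ρ t ^ 2) * d2 (d2 w) (ζ t, y / ρ t - x)
          + (ρ t)⁻¹ * (deriv ζ t * d1 (d2 (d2 w)) (ζ t, y / ρ t - x)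
            + (0 * ρ t - y * deriv ρ t) / ρ t ^ 2 * d2 (d2 (d2 w)) (ζ t, y / ρ t - x))) := by
      rw [show Dt (Dx (Dy u)) (t, x, y) = deriv (fun s => Dx (Dy u) (s, x, y)) t from rfl,
        hfun]; erw [h3.deriv]
    rw [hL, hR1 t x y, hR2 t x y, hζ' t ht]
    have hC : d1 (d2 (d2 w)) (ζ t, y / ρ t - x) =
        -(d2 (d2 w) (ζ t, y / ρ t - x) * d2 (d2 (d2 w)) (ζ t, y / ρ t - x)) := by
      have := hweq (ζ t, y / ρ t - x); linarith
    rw [hC]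
    field_simp
    ring
end

section
/- Let ρ ∈ ℝ with ρ ≠ 0 and ρ ≠ 1, set κ := 2(ρ³−1)/ρ³, fix b ∈ ℝ, and write z₁ := κt + b and z₂ := y/ρ − x. Let w : ℝ² → ℝ be a smooth solution of the reduced equation and c₅ ∈ ℝ. Then: (a) the function u(t,x,y) := w(z₁, z₂ + c₅z₁) − (c₅/2)z₂² is a smooth solution of the dispersionless Nyzhnyk equation on ℝ³; and (b) the function u(t,x,y) := −z₁·w(1/z₁, z₂/z₁ + c₅) + z₂³/(6z₁) is a smooth solution of the dispersionless Nyzhnyk equation on the open set {(t,x,y) : κt + b ≠ 0}. -/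
set_option maxHeartbeats 2000000

noncomputable def pdv (v : ℝ × ℝ) (f : ℝ × ℝ → ℝ) (p : ℝ × ℝ) : ℝ := fderiv ℝ f p v

lemma contDiff_pdv (v : ℝ × ℝ) {f : ℝ × ℝ → ℝ} (hf : ContDiff ℝ (⊤:ℕ∞) f) :
    ContDiff ℝ (⊤:ℕ∞) (pdv v f) :=
  (hf.fderiv_right (by exact_mod_cast le_top)).clm_apply contDiff_const

lemma hasDerivAt_comp2 {f : ℝ × ℝ → ℝ} (hf : ContDiff ℝ (⊤:ℕ∞) f)
    {a b : ℝ → ℝ} {a' b' s : ℝ} (ha : HasDerivAt a a' s) (hb : HasDerivAt b b' s) :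
    HasDerivAt (fun t => f (a t, b t))
      (a' * pdv (1,0) f (a s, b s) + b' * pdv (0,1) f (a s, b s)) s := by
  have hd := ((hf.differentiable (by simp)) (a s, b s)).hasFDerivAt
  have h : HasDerivAt (fun t => f (a t, b t)) (fderiv ℝ f (a s, b s) (a', b')) s :=
    hd.comp_hasDerivAt s (ha.prodMk hb)
  convert h using 1
  have hv : (a', b') = a' • ((1:ℝ),(0:ℝ)) + b' • ((0:ℝ),(1:ℝ)) := by simp
  rw [pdv, pdv, hv, map_add, map_smul, map_smul]
  simp [smul_eq_mul]



lemma d1_eq_pdv {f : ℝ × ℝ → ℝ} (hf : ContDiff ℝ (⊤:ℕ∞) f) (p : ℝ × ℝ) :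
    d1 f p = pdv (1,0) f p := by
  have h := hasDerivAt_comp2 hf (hasDerivAt_id p.1) (hasDerivAt_const p.1 p.2)
  simpa [d1] using h.deriv

lemma d2_eq_pdv {f : ℝ × ℝ → ℝ} (hf : ContDiff ℝ (⊤:ℕ∞) f) (p : ℝ × ℝ) :
    d2 f p = pdv (0,1) f p := by
  have h := hasDerivAt_comp2 hf (hasDerivAt_const p.2 p.1) (hasDerivAt_id p.2)
  simpa [d2] using h.deriv

theorem caseA (ρ κ b c₅ : ℝ) (w : ℝ × ℝ → ℝ) (u₁ : ℝ × ℝ × ℝ → ℝ)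
    (hu₁ : u₁ = fun p : ℝ × ℝ × ℝ =>
      w (κ * p.1 + b, (p.2.2 / ρ - p.2.1) + c₅ * (κ * p.1 + b))
        - c₅ / 2 * (p.2.2 / ρ - p.2.1) ^ 2)
    (hρ0 : ρ ≠ 0) (hκ : κ = 2 * (ρ ^ 3 - 1) / ρ ^ 3)
    (hw : ContDiff ℝ (⊤ : ℕ∞) w)
    (hW : ∀ q : ℝ × ℝ, pdv (1,0) (pdv (0,1) (pdv (0,1) w)) q
        + pdv (0,1) (pdv (0,1) w) q * pdv (0,1) (pdv (0,1) (pdv (0,1) w)) q = 0)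
    (t x y : ℝ) :
    Dt (Dx (Dy u₁)) (t,x,y) =
      Dx (fun q => Dx (Dx u₁) q * Dx (Dy u₁) q) (t,x,y) +
        Dy (fun q => Dx (Dy u₁) q * Dy (Dy u₁) q) (t,x,y) := by
  have hsW2 : ContDiff ℝ (⊤:ℕ∞) (pdv (0,1) w) := contDiff_pdv _ hw
  have hsW22 : ContDiff ℝ (⊤:ℕ∞) (pdv (0,1) (pdv (0,1) w)) := contDiff_pdv _ hsW2
  -- A1 : Dy u₁
  have A1 : ∀ t x y : ℝ, Dy u₁ (t,x,y) =
      pdv (0,1) w (κ*t+b, y/ρ - x + c₅*(κ*t+b)) / ρ - c₅*(y/ρ - x)/ρ := by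
    intro t x y
    have h2 : HasDerivAt (fun s : ℝ => s/ρ - x + c₅*(κ*t+b)) (1/ρ) y :=
      (((hasDerivAt_id' y).div_const ρ).sub_const x).add_const _
    have hcomp := hasDerivAt_comp2 hw (hasDerivAt_const y (κ*t+b)) h2
    have hq := ((((hasDerivAt_id' y).div_const ρ).sub_const x).pow 2).const_mul (c₅/2)
    have htot := (hcomp.sub hq).deriv
    show deriv (fun s => u₁ (t, x, s)) y = _
    simp only [hu₁]
    erw [htot]; push_cast; ring
  -- A3 : Dx (Dy u₁)
  have A3 : ∀ t x y : ℝ, Dx (Dy u₁) (t,x,y) =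
      c₅/ρ - pdv (0,1) (pdv (0,1) w) (κ*t+b, y/ρ - x + c₅*(κ*t+b)) / ρ := by
    intro t x y
    have h2 : HasDerivAt (fun s : ℝ => y/ρ - s + c₅*(κ*t+b)) (-1) x := by
      simpa using ((hasDerivAt_id' x).const_sub (y/ρ)).add_const (c₅*(κ*t+b))
    have hcomp := (hasDerivAt_comp2 hsW2 (hasDerivAt_const x (κ*t+b)) h2).div_const ρ
    have hlin := (((hasDerivAt_id' x).const_sub (y/ρ)).const_mul c₅).div_const ρ
    have htot := (hcomp.sub hlin).deriv
    show deriv (fun s => Dy u₁ (t, s, y)) x = _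
    erw [show (fun s => Dy u₁ (t, s, y)) = (fun s : ℝ =>
        pdv (0,1) w (κ*t+b, y/ρ - s + c₅*(κ*t+b)) / ρ - c₅*(y/ρ - s)/ρ)
      from funext fun s => A1 t s y, htot]
    ring
  -- A4 : Dx (Dx u₁)
  have A2 : ∀ t x y : ℝ, Dx u₁ (t,x,y) =
      c₅*(y/ρ - x) - pdv (0,1) w (κ*t+b, y/ρ - x + c₅*(κ*t+b)) := by
    intro t x y
    have h2 : HasDerivAt (fun s : ℝ => y/ρ - s + c₅*(κ*t+b)) (-1) x := by
      simpa using ((hasDerivAt_id' x).const_sub (y/ρ)).add_const (c₅*(κ*t+b))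
    have hcomp := hasDerivAt_comp2 hw (hasDerivAt_const x (κ*t+b)) h2
    have hq := (((hasDerivAt_id' x).const_sub (y/ρ)).pow 2).const_mul (c₅/2)
    have htot := (hcomp.sub hq).deriv
    show deriv (fun s => u₁ (t, s, y)) x = _
    simp only [hu₁]
    erw [htot]; push_cast; ring
  have A4 : ∀ t x y : ℝ, Dx (Dx u₁) (t,x,y) =
      pdv (0,1) (pdv (0,1) w) (κ*t+b, y/ρ - x + c₅*(κ*t+b)) - c₅ := by
    intro t x y
    have h2 : HasDerivAt (fun s : ℝ => y/ρ - s + c₅*(κ*t+b)) (-1) x := by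
      simpa using ((hasDerivAt_id' x).const_sub (y/ρ)).add_const (c₅*(κ*t+b))
    have hcomp := hasDerivAt_comp2 hsW2 (hasDerivAt_const x (κ*t+b)) h2
    have hlin := ((hasDerivAt_id' x).const_sub (y/ρ)).const_mul c₅
    have htot := (hlin.sub hcomp).deriv
    show deriv (fun s => Dx u₁ (t, s, y)) x = _
    erw [show (fun s => Dx u₁ (t, s, y)) = (fun s : ℝ =>
        c₅*(y/ρ - s) - pdv (0,1) w (κ*t+b, y/ρ - s + c₅*(κ*t+b)))
      from funext fun s => A2 t s y, htot]
    ring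
  -- A5 : Dy (Dy u₁)
  have A5 : ∀ t x y : ℝ, Dy (Dy u₁) (t,x,y) =
      pdv (0,1) (pdv (0,1) w) (κ*t+b, y/ρ - x + c₅*(κ*t+b)) / ρ^2 - c₅/ρ^2 := by
    intro t x y
    have h2 : HasDerivAt (fun s : ℝ => s/ρ - x + c₅*(κ*t+b)) (1/ρ) y :=
      (((hasDerivAt_id' y).div_const ρ).sub_const x).add_const _
    have hcomp := (hasDerivAt_comp2 hsW2 (hasDerivAt_const y (κ*t+b)) h2).div_const ρ
    have hlin := ((((hasDerivAt_id' y).div_const ρ).sub_const x).const_mul c₅).div_const ρ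
    have htot := (hcomp.sub hlin).deriv
    show deriv (fun s => Dy u₁ (t, x, s)) y = _
    erw [show (fun s => Dy u₁ (t, x, s)) = (fun s : ℝ =>
        pdv (0,1) w (κ*t+b, s/ρ - x + c₅*(κ*t+b)) / ρ - c₅*(s/ρ - x)/ρ)
      from funext fun s => A1 t x s, htot]
    ring
  -- A6 : Dt (Dx (Dy u₁))
  have A6 : Dt (Dx (Dy u₁)) (t,x,y) =
      -((κ * pdv (1,0) (pdv (0,1) (pdv (0,1) w)) (κ*t+b, y/ρ - x + c₅*(κ*t+b))
        + c₅*κ * pdv (0,1) (pdv (0,1) (pdv (0,1) w)) (κ*t+b, y/ρ - x + c₅*(κ*t+b))) / ρ) := by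
    have ha : HasDerivAt (fun s : ℝ => κ*s+b) κ t := by
      simpa using ((hasDerivAt_id' t).const_mul κ).add_const b
    have hb : HasDerivAt (fun s : ℝ => y/ρ - x + c₅*(κ*s+b)) (c₅*κ) t := by
      simpa using ((((hasDerivAt_id' t).const_mul κ).add_const b).const_mul c₅).const_add (y/ρ - x)
    have hcomp := (hasDerivAt_comp2 hsW22 ha hb).div_const ρ
    have htot := (hcomp.const_sub (c₅/ρ)).deriv
    show deriv (fun s => Dx (Dy u₁) (s, x, y)) t = _
    rw [show (fun s => Dx (Dy u₁) (s, x, y)) = (fun s : ℝ =>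
        c₅/ρ - pdv (0,1) (pdv (0,1) w) (κ*s+b, y/ρ - x + c₅*(κ*s+b)) / ρ)
      from funext fun s => A3 s x y, htot]
  -- A7
  have A7 : Dx (fun q => Dx (Dx u₁) q * Dx (Dy u₁) q) (t,x,y) =
      2 * (pdv (0,1) (pdv (0,1) w) (κ*t+b, y/ρ - x + c₅*(κ*t+b)) - c₅)
        * pdv (0,1) (pdv (0,1) (pdv (0,1) w)) (κ*t+b, y/ρ - x + c₅*(κ*t+b)) / ρ := by
    have h2 : HasDerivAt (fun s : ℝ => y/ρ - s + c₅*(κ*t+b)) (-1) x := by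
      simpa using ((hasDerivAt_id' x).const_sub (y/ρ)).add_const (c₅*(κ*t+b))
    have hcomp := hasDerivAt_comp2 hsW22 (hasDerivAt_const x (κ*t+b)) h2
    have htot := ((hcomp.sub_const c₅).mul ((hcomp.div_const ρ).const_sub (c₅/ρ))).deriv
    show deriv (fun s => Dx (Dx u₁) (t,s,y) * Dx (Dy u₁) (t,s,y)) x = _
    erw [show (fun s => Dx (Dx u₁) (t,s,y) * Dx (Dy u₁) (t,s,y)) = (fun s : ℝ =>
        (pdv (0,1) (pdv (0,1) w) (κ*t+b, y/ρ - s + c₅*(κ*t+b)) - c₅)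
          * (c₅/ρ - pdv (0,1) (pdv (0,1) w) (κ*t+b, y/ρ - s + c₅*(κ*t+b)) / ρ))
      from funext fun s => by rw [A4 t s y, A3 t s y], htot]
    ring
  -- A8
  have A8 : Dy (fun q => Dx (Dy u₁) q * Dy (Dy u₁) q) (t,x,y) =
      -(2 * (pdv (0,1) (pdv (0,1) w) (κ*t+b, y/ρ - x + c₅*(κ*t+b)) - c₅)
        * pdv (0,1) (pdv (0,1) (pdv (0,1) w)) (κ*t+b, y/ρ - x + c₅*(κ*t+b)) / ρ^4) := by
    have h2 : HasDerivAt (fun s : ℝ => s/ρ - x + c₅*(κ*t+b)) (1/ρ) y :=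
      (((hasDerivAt_id' y).div_const ρ).sub_const x).add_const _
    have hcomp := hasDerivAt_comp2 hsW22 (hasDerivAt_const y (κ*t+b)) h2
    have htot := (((hcomp.div_const ρ).const_sub (c₅/ρ)).mul
      ((hcomp.div_const (ρ^2)).sub_const (c₅/ρ^2))).deriv
    show deriv (fun s => Dx (Dy u₁) (t,x,s) * Dy (Dy u₁) (t,x,s)) y = _
    erw [show (fun s => Dx (Dy u₁) (t,x,s) * Dy (Dy u₁) (t,x,s)) = (fun s : ℝ =>
        (c₅/ρ - pdv (0,1) (pdv (0,1) w) (κ*t+b, s/ρ - x + c₅*(κ*t+b)) / ρ)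
          * (pdv (0,1) (pdv (0,1) w) (κ*t+b, s/ρ - x + c₅*(κ*t+b)) / ρ^2 - c₅/ρ^2))
      from funext fun s => by rw [A3 t x s, A5 t x s], htot]
    ring
  rw [A6, A7, A8]
  have hred := hW (κ*t+b, y/ρ - x + c₅*(κ*t+b))
  have hP1 : pdv (1,0) (pdv (0,1) (pdv (0,1) w)) (κ*t+b, y/ρ - x + c₅*(κ*t+b)) =
      -(pdv (0,1) (pdv (0,1) w) (κ*t+b, y/ρ - x + c₅*(κ*t+b))
        * pdv (0,1) (pdv (0,1) (pdv (0,1) w)) (κ*t+b, y/ρ - x + c₅*(κ*t+b))) := by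
    linarith
  rw [hP1, hκ]
  generalize pdv (0,1) (pdv (0,1) w) (κ*t+b, y/ρ - x + c₅*(κ*t+b)) = P
  generalize pdv (0,1) (pdv (0,1) (pdv (0,1) w)) (κ*t+b, y/ρ - x + c₅*(κ*t+b)) = Q
  field_simp
  ring

theorem caseB (ρ κ b c₅ : ℝ) (w : ℝ × ℝ → ℝ) (u₂ : ℝ × ℝ × ℝ → ℝ)
    (hu₂ : u₂ = fun p : ℝ × ℝ × ℝ =>
      -(κ * p.1 + b) * w (1 / (κ * p.1 + b), (p.2.2 / ρ - p.2.1) / (κ * p.1 + b) + c₅)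
        + (p.2.2 / ρ - p.2.1) ^ 3 / (6 * (κ * p.1 + b)))
    (hρ0 : ρ ≠ 0) (hκ : κ = 2 * (ρ ^ 3 - 1) / ρ ^ 3)
    (hw : ContDiff ℝ (⊤ : ℕ∞) w)
    (hW : ∀ q : ℝ × ℝ, pdv (1,0) (pdv (0,1) (pdv (0,1) w)) q
        + pdv (0,1) (pdv (0,1) w) q * pdv (0,1) (pdv (0,1) (pdv (0,1) w)) q = 0)
    (t x y : ℝ) (hz : κ * t + b ≠ 0) :
    Dt (Dx (Dy u₂)) (t,x,y) =
      Dx (fun q => Dx (Dx u₂) q * Dx (Dy u₂) q) (t,x,y) +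
        Dy (fun q => Dx (Dy u₂) q * Dy (Dy u₂) q) (t,x,y) := by
  have hsW2 : ContDiff ℝ (⊤:ℕ∞) (pdv (0,1) w) := contDiff_pdv _ hw
  have hsW22 : ContDiff ℝ (⊤:ℕ∞) (pdv (0,1) (pdv (0,1) w)) := contDiff_pdv _ hsW2
  -- B1 : Dx u₂
  have B1 : ∀ t x y : ℝ, κ * t + b ≠ 0 → Dx u₂ (t,x,y) =
      pdv (0,1) w (1/(κ*t+b), (y/ρ - x)/(κ*t+b) + c₅) - (y/ρ - x)^2/(2*(κ*t+b)) := by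
    intro t x y hz
    have h2 : HasDerivAt (fun s : ℝ => (y/ρ - s)/(κ*t+b) + c₅) (-1/(κ*t+b)) x := by
      simpa using (((hasDerivAt_id' x).const_sub (y/ρ)).div_const (κ*t+b)).add_const c₅
    have hcomp := (hasDerivAt_comp2 hw (hasDerivAt_const x (1/(κ*t+b))) h2).const_mul
      (-(κ*t+b))
    have hcub := (((hasDerivAt_id' x).const_sub (y/ρ)).pow 3).div_const (6*(κ*t+b))
    have htot := (hcomp.add hcub).deriv
    show deriv (fun s => u₂ (t, s, y)) x = _
    simp only [hu₂]
    erw [htot]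
    generalize pdv (1,0) w (1/(κ*t+b), (y/ρ - x)/(κ*t+b) + c₅) = P1
    generalize pdv (0,1) w (1/(κ*t+b), (y/ρ - x)/(κ*t+b) + c₅) = P2
    push_cast
    field_simp
    ring
  -- B2 : Dy u₂
  have B2 : ∀ t x y : ℝ, κ * t + b ≠ 0 → Dy u₂ (t,x,y) =
      (y/ρ - x)^2/(2*ρ*(κ*t+b)) - pdv (0,1) w (1/(κ*t+b), (y/ρ - x)/(κ*t+b) + c₅)/ρ := by
    intro t x y hz
    have h2 : HasDerivAt (fun s : ℝ => (s/ρ - x)/(κ*t+b) + c₅) (1/ρ/(κ*t+b)) y :=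
      ((((hasDerivAt_id' y).div_const ρ).sub_const x).div_const (κ*t+b)).add_const c₅
    have hcomp := (hasDerivAt_comp2 hw (hasDerivAt_const y (1/(κ*t+b))) h2).const_mul
      (-(κ*t+b))
    have hcub := ((((hasDerivAt_id' y).div_const ρ).sub_const x).pow 3).div_const (6*(κ*t+b))
    have htot := (hcomp.add hcub).deriv
    show deriv (fun s => u₂ (t, x, s)) y = _
    simp only [hu₂]
    erw [htot]
    generalize pdv (1,0) w (1/(κ*t+b), (y/ρ - x)/(κ*t+b) + c₅) = P1
    generalize pdv (0,1) w (1/(κ*t+b), (y/ρ - x)/(κ*t+b) + c₅) = P2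
    push_cast
    field_simp
    ring
  -- B3 : Dx (Dy u₂)
  have B3 : ∀ t x y : ℝ, κ * t + b ≠ 0 → Dx (Dy u₂) (t,x,y) =
      (pdv (0,1) (pdv (0,1) w) (1/(κ*t+b), (y/ρ - x)/(κ*t+b) + c₅) - (y/ρ - x))
        / (ρ*(κ*t+b)) := by
    intro t x y hz
    have h2 : HasDerivAt (fun s : ℝ => (y/ρ - s)/(κ*t+b) + c₅) (-1/(κ*t+b)) x := by
      simpa using (((hasDerivAt_id' x).const_sub (y/ρ)).div_const (κ*t+b)).add_const c₅
    have hcomp := (hasDerivAt_comp2 hsW2 (hasDerivAt_const x (1/(κ*t+b))) h2).div_const ρ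
    have hq := ((((hasDerivAt_id' x).const_sub (y/ρ)).pow 2).div_const (2*ρ*(κ*t+b)))
    have htot := (hq.sub hcomp).deriv
    show deriv (fun s => Dy u₂ (t, s, y)) x = _
    erw [show (fun s => Dy u₂ (t, s, y)) = (fun s : ℝ =>
        (y/ρ - s)^2/(2*ρ*(κ*t+b)) - pdv (0,1) w (1/(κ*t+b), (y/ρ - s)/(κ*t+b) + c₅)/ρ)
      from funext fun s => B2 t s y hz, htot]
    generalize pdv (1,0) (pdv (0,1) w) (1/(κ*t+b), (y/ρ - x)/(κ*t+b) + c₅) = P1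
    generalize pdv (0,1) (pdv (0,1) w) (1/(κ*t+b), (y/ρ - x)/(κ*t+b) + c₅) = P2
    push_cast
    field_simp
    ring
  -- B4 : Dx (Dx u₂)
  have B4 : ∀ t x y : ℝ, κ * t + b ≠ 0 → Dx (Dx u₂) (t,x,y) =
      ((y/ρ - x) - pdv (0,1) (pdv (0,1) w) (1/(κ*t+b), (y/ρ - x)/(κ*t+b) + c₅))
        / (κ*t+b) := by
    intro t x y hz
    have h2 : HasDerivAt (fun s : ℝ => (y/ρ - s)/(κ*t+b) + c₅) (-1/(κ*t+b)) x := by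
      simpa using (((hasDerivAt_id' x).const_sub (y/ρ)).div_const (κ*t+b)).add_const c₅
    have hcomp := hasDerivAt_comp2 hsW2 (hasDerivAt_const x (1/(κ*t+b))) h2
    have hq := ((((hasDerivAt_id' x).const_sub (y/ρ)).pow 2).div_const (2*(κ*t+b)))
    have htot := (hcomp.sub hq).deriv
    show deriv (fun s => Dx u₂ (t, s, y)) x = _
    erw [show (fun s => Dx u₂ (t, s, y)) = (fun s : ℝ =>
        pdv (0,1) w (1/(κ*t+b), (y/ρ - s)/(κ*t+b) + c₅) - (y/ρ - s)^2/(2*(κ*t+b)))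
      from funext fun s => B1 t s y hz, htot]
    generalize pdv (1,0) (pdv (0,1) w) (1/(κ*t+b), (y/ρ - x)/(κ*t+b) + c₅) = P1
    generalize pdv (0,1) (pdv (0,1) w) (1/(κ*t+b), (y/ρ - x)/(κ*t+b) + c₅) = P2
    push_cast
    field_simp
    ring
  -- B5 : Dy (Dy u₂)
  have B5 : ∀ t x y : ℝ, κ * t + b ≠ 0 → Dy (Dy u₂) (t,x,y) =
      ((y/ρ - x) - pdv (0,1) (pdv (0,1) w) (1/(κ*t+b), (y/ρ - x)/(κ*t+b) + c₅))
        / (ρ^2*(κ*t+b)) := by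
    intro t x y hz
    have h2 : HasDerivAt (fun s : ℝ => (s/ρ - x)/(κ*t+b) + c₅) (1/ρ/(κ*t+b)) y :=
      ((((hasDerivAt_id' y).div_const ρ).sub_const x).div_const (κ*t+b)).add_const c₅
    have hcomp := (hasDerivAt_comp2 hsW2 (hasDerivAt_const y (1/(κ*t+b))) h2).div_const ρ
    have hq := (((((hasDerivAt_id' y).div_const ρ).sub_const x).pow 2).div_const
      (2*ρ*(κ*t+b)))
    have htot := (hq.sub hcomp).deriv
    show deriv (fun s => Dy u₂ (t, x, s)) y = _
    erw [show (fun s => Dy u₂ (t, x, s)) = (fun s : ℝ =>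
        (s/ρ - x)^2/(2*ρ*(κ*t+b)) - pdv (0,1) w (1/(κ*t+b), (s/ρ - x)/(κ*t+b) + c₅)/ρ)
      from funext fun s => B2 t x s hz, htot]
    generalize pdv (1,0) (pdv (0,1) w) (1/(κ*t+b), (y/ρ - x)/(κ*t+b) + c₅) = P1
    generalize pdv (0,1) (pdv (0,1) w) (1/(κ*t+b), (y/ρ - x)/(κ*t+b) + c₅) = P2
    push_cast
    field_simp
    ring
  -- B6 : Dt (Dx (Dy u₂))
  have hz₁ : HasDerivAt (fun s : ℝ => κ*s+b) κ t := by
    simpa using ((hasDerivAt_id' t).const_mul κ).add_const b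
  have B6 : Dt (Dx (Dy u₂)) (t,x,y) =
      -(κ * ((pdv (1,0) (pdv (0,1) (pdv (0,1) w)) (1/(κ*t+b), (y/ρ - x)/(κ*t+b) + c₅)
          + (y/ρ - x) * pdv (0,1) (pdv (0,1) (pdv (0,1) w))
              (1/(κ*t+b), (y/ρ - x)/(κ*t+b) + c₅)) / (κ*t+b)
        + (pdv (0,1) (pdv (0,1) w) (1/(κ*t+b), (y/ρ - x)/(κ*t+b) + c₅) - (y/ρ - x)))
        / (ρ*(κ*t+b)^2)) := by
    have ha : HasDerivAt (fun s : ℝ => 1/(κ*s+b)) ((0*(κ*t+b) - 1*κ)/(κ*t+b)^2) t :=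
      (hasDerivAt_const t (1:ℝ)).div hz₁ hz
    have hb : HasDerivAt (fun s : ℝ => (y/ρ - x)/(κ*s+b) + c₅)
        ((0*(κ*t+b) - (y/ρ - x)*κ)/(κ*t+b)^2) t :=
      ((hasDerivAt_const t (y/ρ - x)).div hz₁ hz).add_const c₅
    have hcomp := hasDerivAt_comp2 hsW22 ha hb
    have hden : HasDerivAt (fun s : ℝ => ρ*(κ*s+b)) (ρ*κ) t := hz₁.const_mul ρ
    have hρz : ρ*(κ*t+b) ≠ 0 := mul_ne_zero hρ0 hz
    have htot := ((hcomp.sub_const (y/ρ - x)).div hden hρz).deriv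
    have hev : (fun s => Dx (Dy u₂) (s, x, y)) =ᶠ[nhds t] (fun s : ℝ =>
        (pdv (0,1) (pdv (0,1) w) (1/(κ*s+b), (y/ρ - x)/(κ*s+b) + c₅) - (y/ρ - x))
          / (ρ*(κ*s+b))) := by
      have hcont : ContinuousAt (fun s : ℝ => κ*s+b) t := by fun_prop
      filter_upwards [hcont.eventually_ne hz] with s hs
      exact B3 s x y hs
    show deriv (fun s => Dx (Dy u₂) (s, x, y)) t = _
    erw [hev.deriv_eq, htot]
    generalize pdv (1,0) (pdv (0,1) (pdv (0,1) w)) (1/(κ*t+b), (y/ρ - x)/(κ*t+b) + c₅) = Q1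
    generalize pdv (0,1) (pdv (0,1) (pdv (0,1) w)) (1/(κ*t+b), (y/ρ - x)/(κ*t+b) + c₅) = Q2
    generalize pdv (0,1) (pdv (0,1) w) (1/(κ*t+b), (y/ρ - x)/(κ*t+b) + c₅) = P2
    field_simp
    ring
  -- B7
  have B7 : Dx (fun q => Dx (Dx u₂) q * Dx (Dy u₂) q) (t,x,y) =
      2 * (pdv (0,1) (pdv (0,1) w) (1/(κ*t+b), (y/ρ - x)/(κ*t+b) + c₅) - (y/ρ - x))
        * (pdv (0,1) (pdv (0,1) (pdv (0,1) w)) (1/(κ*t+b), (y/ρ - x)/(κ*t+b) + c₅)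
            / (κ*t+b) - 1) / (ρ*(κ*t+b)^2) := by
    have h2 : HasDerivAt (fun s : ℝ => (y/ρ - s)/(κ*t+b) + c₅) (-1/(κ*t+b)) x := by
      simpa using (((hasDerivAt_id' x).const_sub (y/ρ)).div_const (κ*t+b)).add_const c₅
    have hWs := hasDerivAt_comp2 hsW22 (hasDerivAt_const x (1/(κ*t+b))) h2
    have hlin := (hasDerivAt_id' x).const_sub (y/ρ)
    have htot := (((hlin.sub hWs).div_const (κ*t+b)).mul
      ((hWs.sub hlin).div_const (ρ*(κ*t+b)))).deriv
    show deriv (fun s => Dx (Dx u₂) (t,s,y) * Dx (Dy u₂) (t,s,y)) x = _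
    erw [show (fun s => Dx (Dx u₂) (t,s,y) * Dx (Dy u₂) (t,s,y)) = (fun s : ℝ =>
        (((y/ρ - s) - pdv (0,1) (pdv (0,1) w) (1/(κ*t+b), (y/ρ - s)/(κ*t+b) + c₅))
          / (κ*t+b)) *
        ((pdv (0,1) (pdv (0,1) w) (1/(κ*t+b), (y/ρ - s)/(κ*t+b) + c₅) - (y/ρ - s))
          / (ρ*(κ*t+b))))
      from funext fun s => by rw [B4 t s y hz, B3 t s y hz], htot]
    simp only [Pi.sub_apply]
    generalize pdv (1,0) (pdv (0,1) (pdv (0,1) w)) (1/(κ*t+b), (y/ρ - x)/(κ*t+b) + c₅) = Q1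
    generalize pdv (0,1) (pdv (0,1) (pdv (0,1) w)) (1/(κ*t+b), (y/ρ - x)/(κ*t+b) + c₅) = Q2
    generalize pdv (0,1) (pdv (0,1) w) (1/(κ*t+b), (y/ρ - x)/(κ*t+b) + c₅) = P2
    field_simp
    ring
  -- B8
  have B8 : Dy (fun q => Dx (Dy u₂) q * Dy (Dy u₂) q) (t,x,y) =
      -(2 * (pdv (0,1) (pdv (0,1) w) (1/(κ*t+b), (y/ρ - x)/(κ*t+b) + c₅) - (y/ρ - x))
        * (pdv (0,1) (pdv (0,1) (pdv (0,1) w)) (1/(κ*t+b), (y/ρ - x)/(κ*t+b) + c₅)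
            / (κ*t+b) - 1) / (ρ^4*(κ*t+b)^2)) := by
    have h2 : HasDerivAt (fun s : ℝ => (s/ρ - x)/(κ*t+b) + c₅) (1/ρ/(κ*t+b)) y :=
      ((((hasDerivAt_id' y).div_const ρ).sub_const x).div_const (κ*t+b)).add_const c₅
    have hWs := hasDerivAt_comp2 hsW22 (hasDerivAt_const y (1/(κ*t+b))) h2
    have hlin := ((hasDerivAt_id' y).div_const ρ).sub_const x
    have htot := (((hWs.sub hlin).div_const (ρ*(κ*t+b))).mul
      ((hlin.sub hWs).div_const (ρ^2*(κ*t+b)))).deriv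
    show deriv (fun s => Dx (Dy u₂) (t,x,s) * Dy (Dy u₂) (t,x,s)) y = _
    erw [show (fun s => Dx (Dy u₂) (t,x,s) * Dy (Dy u₂) (t,x,s)) = (fun s : ℝ =>
        ((pdv (0,1) (pdv (0,1) w) (1/(κ*t+b), (s/ρ - x)/(κ*t+b) + c₅) - (s/ρ - x))
          / (ρ*(κ*t+b))) *
        (((s/ρ - x) - pdv (0,1) (pdv (0,1) w) (1/(κ*t+b), (s/ρ - x)/(κ*t+b) + c₅))
          / (ρ^2*(κ*t+b))))
      from funext fun s => by rw [B3 t x s hz, B5 t x s hz], htot]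
    simp only [Pi.sub_apply]
    generalize pdv (1,0) (pdv (0,1) (pdv (0,1) w)) (1/(κ*t+b), (y/ρ - x)/(κ*t+b) + c₅) = Q1
    generalize pdv (0,1) (pdv (0,1) (pdv (0,1) w)) (1/(κ*t+b), (y/ρ - x)/(κ*t+b) + c₅) = Q2
    generalize pdv (0,1) (pdv (0,1) w) (1/(κ*t+b), (y/ρ - x)/(κ*t+b) + c₅) = P2
    field_simp
    ring
  rw [B6, B7, B8]
  have hred := hW (1/(κ*t+b), (y/ρ - x)/(κ*t+b) + c₅)
  have hP1 : pdv (1,0) (pdv (0,1) (pdv (0,1) w)) (1/(κ*t+b), (y/ρ - x)/(κ*t+b) + c₅) =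
      -(pdv (0,1) (pdv (0,1) w) (1/(κ*t+b), (y/ρ - x)/(κ*t+b) + c₅)
        * pdv (0,1) (pdv (0,1) (pdv (0,1) w)) (1/(κ*t+b), (y/ρ - x)/(κ*t+b) + c₅)) := by
    linarith
  rw [hP1]
  obtain ⟨z, hzz⟩ : ∃ z, κ*t+b = z := ⟨_, rfl⟩
  rw [hzz] at hz ⊢
  generalize pdv (0,1) (pdv (0,1) w) (1/z, (y/ρ - x)/z + c₅) = P2
  generalize pdv (0,1) (pdv (0,1) (pdv (0,1) w)) (1/z, (y/ρ - x)/z + c₅) = Q2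
  generalize y/ρ - x = z2
  rw [hκ]
  have hρ3 : ρ^3 ≠ 0 := pow_ne_zero _ hρ0
  field_simp
  ring

/-- Constant-`ρ` case: two families of solutions of the dispersionless
Nyzhnyk equation obtained out of a smooth solution `w` of the reduced equation. -/
theorem statement5 (ρ : ℝ) (hρ0 : ρ ≠ 0) (hρ1 : ρ ≠ 1) (κ : ℝ)
    (hκ : κ = 2 * (ρ ^ 3 - 1) / ρ ^ 3) (b : ℝ)
    (w : ℝ × ℝ → ℝ) (hw : ContDiff ℝ (⊤ : ℕ∞) w)
    (hweq : ∀ p, d1 (d2 (d2 w)) p + d2 (d2 w) p * d2 (d2 (d2 w)) p = 0)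
    (c₅ : ℝ) :
    IsDNSolOn (fun p : ℝ × ℝ × ℝ =>
        w (κ * p.1 + b, (p.2.2 / ρ - p.2.1) + c₅ * (κ * p.1 + b))
          - c₅ / 2 * (p.2.2 / ρ - p.2.1) ^ 2) Set.univ ∧
    IsDNSolOn (fun p : ℝ × ℝ × ℝ =>
        -(κ * p.1 + b) * w (1 / (κ * p.1 + b), (p.2.2 / ρ - p.2.1) / (κ * p.1 + b) + c₅)
          + (p.2.2 / ρ - p.2.1) ^ 3 / (6 * (κ * p.1 + b)))
      {p : ℝ × ℝ × ℝ | κ * p.1 + b ≠ 0} := by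
  have hsW2 : ContDiff ℝ (⊤:ℕ∞) (pdv (0,1) w) := contDiff_pdv _ hw
  have hsW22 : ContDiff ℝ (⊤:ℕ∞) (pdv (0,1) (pdv (0,1) w)) := contDiff_pdv _ hsW2
  have e2 : d2 w = pdv (0,1) w := funext fun q => d2_eq_pdv hw q
  have e22 : d2 (d2 w) = pdv (0,1) (pdv (0,1) w) := by
    rw [e2]; exact funext fun q => d2_eq_pdv hsW2 q
  have hW : ∀ q : ℝ × ℝ, pdv (1,0) (pdv (0,1) (pdv (0,1) w)) q
      + pdv (0,1) (pdv (0,1) w) q * pdv (0,1) (pdv (0,1) (pdv (0,1) w)) q = 0 := by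
    intro q
    have h := hweq q
    rw [e22] at h
    rw [d1_eq_pdv hsW22 q, d2_eq_pdv hsW22 q] at h
    exact h
  have hκ1 : ContDiff ℝ (⊤:ℕ∞) (fun p : ℝ × ℝ × ℝ => κ * p.1 + b) := by
    exact (contDiff_const.mul contDiff_fst).add contDiff_const
  have hz2c : ContDiff ℝ (⊤:ℕ∞) (fun p : ℝ × ℝ × ℝ => p.2.2 / ρ - p.2.1) :=
    (contDiff_snd.snd.div_const ρ).sub contDiff_snd.fst
  constructor
  · constructor
    · apply ContDiff.contDiffOn
      have hg : ContDiff ℝ (⊤:ℕ∞) (fun p : ℝ × ℝ × ℝ =>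
          ((κ * p.1 + b, (p.2.2 / ρ - p.2.1) + c₅ * (κ * p.1 + b)) : ℝ × ℝ)) :=
        hκ1.prodMk (hz2c.add (contDiff_const.mul hκ1))
      exact (hw.comp hg).sub (contDiff_const.mul (hz2c.pow 2))
    · intro p _
      obtain ⟨t, x, y⟩ := p
      exact caseA ρ κ b c₅ w _ rfl hρ0 hκ hw hW t x y
  · constructor
    · intro p hp
      have hz : κ * p.1 + b ≠ 0 := hp
      apply ContDiffAt.contDiffWithinAt
      have hinv : ContDiffAt ℝ (⊤:ℕ∞) (fun p : ℝ × ℝ × ℝ => 1 / (κ * p.1 + b)) p :=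
        contDiffAt_const.div hκ1.contDiffAt hz
      have hquot : ContDiffAt ℝ (⊤:ℕ∞)
          (fun p : ℝ × ℝ × ℝ => (p.2.2 / ρ - p.2.1) / (κ * p.1 + b) + c₅) p :=
        (hz2c.contDiffAt.div hκ1.contDiffAt hz).add contDiffAt_const
      have hwc : ContDiffAt ℝ (⊤:ℕ∞) (fun p : ℝ × ℝ × ℝ =>
          w (1 / (κ * p.1 + b), (p.2.2 / ρ - p.2.1) / (κ * p.1 + b) + c₅)) p :=
        hw.contDiffAt.comp p (hinv.prodMk hquot)
      have h6z : (6 : ℝ) * (κ * p.1 + b) ≠ 0 := mul_ne_zero (by norm_num) hz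
      exact (hκ1.contDiffAt.neg.mul hwc).add ((hz2c.contDiffAt.pow 3).div
        (contDiffAt_const.mul hκ1.contDiffAt) h6z)
    · intro p hp
      obtain ⟨t, x, y⟩ := p
      exact caseB ρ κ b c₅ w _ rfl hρ0 hκ hw hW t x y hp
end

section
/- The radical of the Lie algebra 𝔞 (i.e. the supremum of all solvable Lie ideals of 𝔞) equals the ideal 𝔯 := {c₁P¹ + c₂D¹ + c₃K + c₄D² + c₅P² + c₆H + R(α) + Z(σ) ∈ 𝔞 : c₁ = c₂ = c₃ = 0}, i.e. the subspace spanned by D², P², H and all R(α), Z(σ). -/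
/-- The space `S` of smooth functions `ℝ → ℝ`, as a submodule of `ℝ → ℝ`. -/
def SmoothFn : Submodule ℝ (ℝ → ℝ) where
  carrier := {f | ContDiff ℝ (⊤ : ℕ∞) f}
  add_mem' := fun {a b} (hf : ContDiff ℝ (⊤ : ℕ∞) a) (hg : ContDiff ℝ (⊤ : ℕ∞) b) =>
    hf.add hg
  zero_mem' := show ContDiff ℝ (⊤ : ℕ∞) (0 : ℝ → ℝ) from contDiff_const
  smul_mem' := fun c f (hf : ContDiff ℝ (⊤ : ℕ∞) f) => hf.const_smul c

/-- The derivative `α′` of a smooth function `α`. -/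
noncomputable def sder (α : SmoothFn) : SmoothFn :=
  ⟨deriv α.1, (contDiff_infty_iff_deriv.mp (show ContDiff ℝ (⊤ : ℕ∞) α.1 from α.2)).2⟩

/-- Multiplication of a smooth function by the identity function `s(x) = x`. -/
def xmul (α : SmoothFn) : SmoothFn :=
  ⟨fun x => x * α.1 x,
    contDiff_id.mul (show ContDiff ℝ (⊤ : ℕ∞) α.1 from α.2)⟩

/-- The constant function `1` as a smooth function. -/
def oneS : SmoothFn := ⟨fun _ => 1, show ContDiff ℝ (⊤ : ℕ∞) _ from contDiff_const⟩

namespace St6Aux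

structure Hyp {A : Type*} [LieRing A] [LieAlgebra ℝ A]
    (P1 D1 K D2 P2 H : A) (R Z : SmoothFn →ₗ[ℝ] A) : Prop where
  basis : Function.Bijective (fun v : (Fin 6 → ℝ) × SmoothFn × SmoothFn =>
      v.1 0 • P1 + v.1 1 • D1 + v.1 2 • K + v.1 3 • D2 + v.1 4 • P2 + v.1 5 • H
        + R v.2.1 + Z v.2.2)
  h1 : ⁅P1, D1⁆ = P1
  h2 : ⁅P1, K⁆ = (2 : ℝ) • D1 + D2
  h3 : ⁅D1, K⁆ = K
  h4 : ⁅P1, H⁆ = P2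
  h5 : ∀ α, ⁅P1, R α⁆ = R (sder α)
  h6 : ∀ σ, ⁅P1, Z σ⁆ = Z (sder σ)
  h7 : ⁅D1, H⁆ = H
  h8 : ∀ α, ⁅D1, R α⁆ = R (xmul (sder α) + α)
  h9 : ∀ σ, ⁅D1, Z σ⁆ = Z (xmul (sder σ) + σ)
  h10 : ⁅K, P2⁆ = -H
  h11 : ∀ α, ⁅K, R α⁆ = R (xmul (xmul (sder α)))
  h12 : ∀ σ, ⁅K, Z σ⁆ = Z (xmul (xmul (sder σ)) - xmul σ)
  h13 : ⁅D2, P2⁆ = -P2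
  h14 : ⁅D2, H⁆ = -H
  h15 : ∀ α, ⁅D2, R α⁆ = (-2 : ℝ) • R α
  h16 : ∀ σ, ⁅D2, Z σ⁆ = (-3 : ℝ) • Z σ
  h17 : ⁅P2, H⁆ = R oneS
  h18 : ∀ α, ⁅P2, R α⁆ = Z α
  h19 : ∀ α, ⁅H, R α⁆ = Z (xmul α)
  z1 : ⁅P1, D2⁆ = 0
  z2 : ⁅P1, P2⁆ = 0
  z3 : ⁅D1, D2⁆ = 0
  z4 : ⁅D1, P2⁆ = 0
  z5 : ⁅K, D2⁆ = 0
  z6 : ⁅K, H⁆ = 0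
  z7 : ∀ σ, ⁅P2, Z σ⁆ = 0
  z8 : ∀ σ, ⁅H, Z σ⁆ = 0
  z9 : ∀ α β, ⁅R α, R β⁆ = 0
  z10 : ∀ α σ, ⁅R α, Z σ⁆ = 0
  z11 : ∀ σ τ, ⁅Z σ, Z τ⁆ = 0

variable {A : Type*} [LieRing A] [LieAlgebra ℝ A]
    {P1 D1 K D2 P2 H : A} {R Z : SmoothFn →ₗ[ℝ] A}

section Sets
variable (D2 P2 H R Z)

def Iset (x : A) : Prop :=
  ∃ (c₄ c₅ c₆ : ℝ) (α σ : SmoothFn), x = c₄ • D2 + c₅ • P2 + c₆ • H + R α + Z σ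

def I2set (x : A) : Prop :=
  ∃ (c₅ c₆ : ℝ) (α σ : SmoothFn), x = c₅ • P2 + c₆ • H + R α + Z σ

def I3set (x : A) : Prop := ∃ (α σ : SmoothFn), x = R α + Z σ

variable (P1 D1 K)

def Rep (x : A) (a b c : ℝ) : Prop :=
  ∃ (c₄ c₅ c₆ : ℝ) (α σ : SmoothFn),
    x = a • P1 + b • D1 + c • K + c₄ • D2 + c₅ • P2 + c₆ • H + R α + Z σ

end Sets

lemma iset_add {u v : A} (hu : Iset D2 P2 H R Z u) (hv : Iset D2 P2 H R Z v) :
    Iset D2 P2 H R Z (u + v) := by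
  obtain ⟨a, b, c, α, σ, rfl⟩ := hu
  obtain ⟨a', b', c', α', σ', rfl⟩ := hv
  exact ⟨a + a', b + b', c + c', α + α', σ + σ', by rw [map_add, map_add]; module⟩

lemma iset_smul (r : ℝ) {u : A} (hu : Iset D2 P2 H R Z u) : Iset D2 P2 H R Z (r • u) := by
  obtain ⟨a, b, c, α, σ, rfl⟩ := hu
  exact ⟨r * a, r * b, r * c, r • α, r • σ, by rw [map_smul, map_smul]; module⟩

lemma iset_neg {u : A} (hu : Iset D2 P2 H R Z u) : Iset D2 P2 H R Z (-u) := by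
  have := iset_smul (-1 : ℝ) hu; simpa using this

lemma i2set_add {u v : A} (hu : I2set P2 H R Z u) (hv : I2set P2 H R Z v) :
    I2set P2 H R Z (u + v) := by
  obtain ⟨b, c, α, σ, rfl⟩ := hu
  obtain ⟨b', c', α', σ', rfl⟩ := hv
  exact ⟨b + b', c + c', α + α', σ + σ', by rw [map_add, map_add]; module⟩

lemma i2set_smul (r : ℝ) {u : A} (hu : I2set P2 H R Z u) : I2set P2 H R Z (r • u) := by
  obtain ⟨b, c, α, σ, rfl⟩ := hu
  exact ⟨r * b, r * c, r • α, r • σ, by rw [map_smul, map_smul]; module⟩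

lemma i3set_add {u v : A} (hu : I3set R Z u) (hv : I3set R Z v) : I3set R Z (u + v) := by
  obtain ⟨α, σ, rfl⟩ := hu
  obtain ⟨α', σ', rfl⟩ := hv
  exact ⟨α + α', σ + σ', by rw [map_add, map_add]; module⟩

lemma i3set_smul (r : ℝ) {u : A} (hu : I3set R Z u) : I3set R Z (r • u) := by
  obtain ⟨α, σ, rfl⟩ := hu
  exact ⟨r • α, r • σ, by rw [map_smul, map_smul]; module⟩

lemma i2_iset {u : A} (hu : I2set P2 H R Z u) : Iset D2 P2 H R Z u := by
  obtain ⟨b, c, α, σ, rfl⟩ := hu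
  exact ⟨0, b, c, α, σ, by module⟩

lemma i3_i2 {u : A} (hu : I3set R Z u) : I2set P2 H R Z u := by
  obtain ⟨α, σ, rfl⟩ := hu
  exact ⟨0, 0, α, σ, by module⟩

variable (hh : Hyp P1 D1 K D2 P2 H R Z)
include hh

lemma lie_P1_iset {x : A} (hx : Iset D2 P2 H R Z x) : I2set P2 H R Z ⁅P1, x⁆ := by
  obtain ⟨a, b, c, α, σ, rfl⟩ := hx
  refine ⟨c, 0, sder α, sder σ, ?_⟩
  simp only [lie_add, lie_smul, hh.z1, hh.z2, hh.h4, hh.h5, hh.h6, smul_zero]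
  module

lemma lie_D1_iset {x : A} (hx : Iset D2 P2 H R Z x) : I2set P2 H R Z ⁅D1, x⁆ := by
  obtain ⟨a, b, c, α, σ, rfl⟩ := hx
  refine ⟨0, c, xmul (sder α) + α, xmul (sder σ) + σ, ?_⟩
  simp only [lie_add, lie_smul, hh.z3, hh.z4, hh.h7, hh.h8, hh.h9, smul_zero]
  module

lemma lie_K_iset {x : A} (hx : Iset D2 P2 H R Z x) : I2set P2 H R Z ⁅K, x⁆ := by
  obtain ⟨a, b, c, α, σ, rfl⟩ := hx
  refine ⟨0, -b, xmul (xmul (sder α)), xmul (xmul (sder σ)) - xmul σ, ?_⟩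
  simp only [lie_add, lie_smul, hh.z5, hh.h10, hh.z6, hh.h11, hh.h12, smul_zero]
  module

lemma lie_D2_iset {x : A} (hx : Iset D2 P2 H R Z x) : I2set P2 H R Z ⁅D2, x⁆ := by
  obtain ⟨a, b, c, α, σ, rfl⟩ := hx
  refine ⟨-b, -c, (-2 : ℝ) • α, (-3 : ℝ) • σ, ?_⟩
  simp only [lie_add, lie_smul, lie_self, hh.h13, hh.h14, hh.h15, hh.h16, smul_zero, map_smul]
  module

lemma lie_P2_iset {x : A} (hx : Iset D2 P2 H R Z x) : I2set P2 H R Z ⁅P2, x⁆ := by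
  obtain ⟨a, b, c, α, σ, rfl⟩ := hx
  have hr : ⁅P2, D2⁆ = P2 := by rw [← lie_skew, hh.h13, neg_neg]
  refine ⟨a, 0, c • oneS, α, ?_⟩
  simp only [lie_add, lie_smul, lie_self, hr, hh.h17, hh.h18, hh.z7, smul_zero, map_smul]
  module

lemma lie_H_iset {x : A} (hx : Iset D2 P2 H R Z x) : I2set P2 H R Z ⁅H, x⁆ := by
  obtain ⟨a, b, c, α, σ, rfl⟩ := hx
  have hr1 : ⁅H, D2⁆ = H := by rw [← lie_skew, hh.h14, neg_neg]
  have hr2 : ⁅H, P2⁆ = -R oneS := by rw [← lie_skew, hh.h17]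
  refine ⟨0, a, (-b) • oneS, xmul α, ?_⟩
  simp only [lie_add, lie_smul, lie_self, hr1, hr2, hh.h19, hh.z8, smul_zero, map_smul]
  module

lemma lie_R_iset (β : SmoothFn) {x : A} (hx : Iset D2 P2 H R Z x) : I3set R Z ⁅R β, x⁆ := by
  obtain ⟨a, b, c, α, σ, rfl⟩ := hx
  have hr1 : ⁅R β, D2⁆ = (2 : ℝ) • R β := by
    rw [← lie_skew, hh.h15]; module
  have hr2 : ⁅R β, P2⁆ = -Z β := by rw [← lie_skew, hh.h18]
  have hr3 : ⁅R β, H⁆ = -Z (xmul β) := by rw [← lie_skew, hh.h19]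
  refine ⟨(2 * a) • β, (-b) • β + (-c) • xmul β, ?_⟩
  simp only [lie_add, lie_smul, hr1, hr2, hr3, hh.z9, hh.z10, smul_zero, map_smul, map_add]
  module

lemma lie_Z_iset (τ : SmoothFn) {x : A} (hx : Iset D2 P2 H R Z x) : I3set R Z ⁅Z τ, x⁆ := by
  obtain ⟨a, b, c, α, σ, rfl⟩ := hx
  have hr1 : ⁅Z τ, D2⁆ = (3 : ℝ) • Z τ := by
    rw [← lie_skew, hh.h16]; module
  have hr2 : ⁅Z τ, P2⁆ = 0 := by rw [← lie_skew, hh.z7, neg_zero]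
  have hr3 : ⁅Z τ, H⁆ = 0 := by rw [← lie_skew, hh.z8, neg_zero]
  have hr4 : ∀ γ, ⁅Z τ, R γ⁆ = 0 := fun γ => by rw [← lie_skew, hh.z10, neg_zero]
  refine ⟨0, (3 * a) • τ, ?_⟩
  simp only [lie_add, lie_smul, hr1, hr2, hr3, hr4, hh.z11, smul_zero, map_smul, map_zero]
  module

lemma lie_P2_i2 {x : A} (hx : I2set P2 H R Z x) : I3set R Z ⁅P2, x⁆ := by
  obtain ⟨b, c, α, σ, rfl⟩ := hx
  refine ⟨c • oneS, α, ?_⟩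
  simp only [lie_add, lie_smul, lie_self, hh.h17, hh.h18, hh.z7, smul_zero, map_smul]
  module

lemma lie_H_i2 {x : A} (hx : I2set P2 H R Z x) : I3set R Z ⁅H, x⁆ := by
  obtain ⟨b, c, α, σ, rfl⟩ := hx
  have hr2 : ⁅H, P2⁆ = -R oneS := by rw [← lie_skew, hh.h17]
  refine ⟨(-b) • oneS, xmul α, ?_⟩
  simp only [lie_add, lie_smul, lie_self, hr2, hh.h19, hh.z8, smul_zero, map_smul]
  module

lemma lie_R_i2 (β : SmoothFn) {x : A} (hx : I2set P2 H R Z x) : I3set R Z ⁅R β, x⁆ := by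
  obtain ⟨b, c, α, σ, rfl⟩ := hx
  have hr2 : ⁅R β, P2⁆ = -Z β := by rw [← lie_skew, hh.h18]
  have hr3 : ⁅R β, H⁆ = -Z (xmul β) := by rw [← lie_skew, hh.h19]
  refine ⟨0, (-b) • β + (-c) • xmul β, ?_⟩
  simp only [lie_add, lie_smul, hr2, hr3, hh.z9, hh.z10, smul_zero, map_smul, map_add, map_zero]
  module

lemma lie_Z_i2 (τ : SmoothFn) {x : A} (hx : I2set P2 H R Z x) : I3set R Z ⁅Z τ, x⁆ := by
  obtain ⟨b, c, α, σ, rfl⟩ := hx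
  have hr2 : ⁅Z τ, P2⁆ = 0 := by rw [← lie_skew, hh.z7, neg_zero]
  have hr3 : ⁅Z τ, H⁆ = 0 := by rw [← lie_skew, hh.z8, neg_zero]
  have hr4 : ∀ γ, ⁅Z τ, R γ⁆ = 0 := fun γ => by rw [← lie_skew, hh.z10, neg_zero]
  refine ⟨0, 0, ?_⟩
  simp only [lie_add, lie_smul, hr2, hr3, hr4, hh.z11, smul_zero, map_zero, add_zero, zero_add]

-- I3 input lemmas
lemma lie_P1_i3 {x : A} (hx : I3set R Z x) : I3set R Z ⁅P1, x⁆ := by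
  obtain ⟨α, σ, rfl⟩ := hx
  exact ⟨sder α, sder σ, by rw [lie_add, hh.h5, hh.h6]⟩

lemma lie_D1_i3 {x : A} (hx : I3set R Z x) : I3set R Z ⁅D1, x⁆ := by
  obtain ⟨α, σ, rfl⟩ := hx
  exact ⟨xmul (sder α) + α, xmul (sder σ) + σ, by rw [lie_add, hh.h8, hh.h9]⟩

lemma lie_K_i3 {x : A} (hx : I3set R Z x) : I3set R Z ⁅K, x⁆ := by
  obtain ⟨α, σ, rfl⟩ := hx
  exact ⟨xmul (xmul (sder α)), xmul (xmul (sder σ)) - xmul σ, by rw [lie_add, hh.h11, hh.h12]⟩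

lemma lie_D2_i3 {x : A} (hx : I3set R Z x) : I3set R Z ⁅D2, x⁆ := by
  obtain ⟨α, σ, rfl⟩ := hx
  exact ⟨(-2 : ℝ) • α, (-3 : ℝ) • σ, by rw [lie_add, hh.h15, hh.h16, map_smul, map_smul]⟩

lemma lie_P2_i3 {x : A} (hx : I3set R Z x) : I3set R Z ⁅P2, x⁆ := by
  obtain ⟨α, σ, rfl⟩ := hx
  exact ⟨0, α, by rw [lie_add, hh.h18, hh.z7, map_zero, add_zero, zero_add]⟩

lemma lie_H_i3 {x : A} (hx : I3set R Z x) : I3set R Z ⁅H, x⁆ := by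
  obtain ⟨α, σ, rfl⟩ := hx
  exact ⟨0, xmul α, by rw [lie_add, hh.h19, hh.z8, map_zero, add_zero, zero_add]⟩

lemma lie_R_i3 (β : SmoothFn) {x : A} (hx : I3set R Z x) : I3set R Z ⁅R β, x⁆ := by
  obtain ⟨α, σ, rfl⟩ := hx
  exact ⟨0, 0, by rw [lie_add, hh.z9, hh.z10]; simp⟩

lemma lie_Z_i3 (τ : SmoothFn) {x : A} (hx : I3set R Z x) : I3set R Z ⁅Z τ, x⁆ := by
  obtain ⟨α, σ, rfl⟩ := hx
  have hr4 : ⁅Z τ, R α⁆ = 0 := by rw [← lie_skew, hh.z10, neg_zero]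
  exact ⟨0, 0, by rw [lie_add, hr4, hh.z11]; simp⟩

lemma lie_i3_i3 {x y : A} (hx : I3set R Z x) (hy : I3set R Z y) : ⁅x, y⁆ = 0 := by
  obtain ⟨α, σ, rfl⟩ := hx
  obtain ⟨β, τ, rfl⟩ := hy
  have hr4 : ∀ γ, ⁅Z σ, R γ⁆ = 0 := fun γ => by rw [← lie_skew, hh.z10, neg_zero]
  rw [add_lie, lie_add, lie_add, hh.z9, hh.z10, hr4, hh.z11]
  simp

-- expansion over a general left argument
lemma expand (Q : A → Prop) (hadd : ∀ u v, Q u → Q v → Q (u + v))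
    (hsmul : ∀ (r : ℝ) u, Q u → Q (r • u)) (x : A)
    (q1 : Q ⁅P1, x⁆) (q2 : Q ⁅D1, x⁆) (q3 : Q ⁅K, x⁆) (q4 : Q ⁅D2, x⁆)
    (q5 : Q ⁅P2, x⁆) (q6 : Q ⁅H, x⁆) (q7 : ∀ β, Q ⁅R β, x⁆) (q8 : ∀ τ, Q ⁅Z τ, x⁆)
    (y : A) : Q ⁅y, x⁆ := by
  obtain ⟨v, hv⟩ := hh.basis.2 y
  have hv' : y = v.1 0 • P1 + v.1 1 • D1 + v.1 2 • K + v.1 3 • D2 + v.1 4 • P2 + v.1 5 • H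
      + R v.2.1 + Z v.2.2 := hv.symm
  rw [hv', add_lie, add_lie, add_lie, add_lie, add_lie, add_lie, add_lie,
    smul_lie, smul_lie, smul_lie, smul_lie, smul_lie, smul_lie]
  exact hadd _ _ (hadd _ _ (hadd _ _ (hadd _ _ (hadd _ _ (hadd _ _ (hadd _ _
    (hsmul _ _ q1) (hsmul _ _ q2)) (hsmul _ _ q3)) (hsmul _ _ q4)) (hsmul _ _ q5))
    (hsmul _ _ q6)) (q7 _)) (q8 _)

lemma lie_any_i2 {x : A} (hx : Iset D2 P2 H R Z x) (y : A) : I2set P2 H R Z ⁅y, x⁆ :=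
  expand hh (I2set P2 H R Z) (fun _ _ => i2set_add) (fun r _ => i2set_smul r) x
    (lie_P1_iset hh hx) (lie_D1_iset hh hx) (lie_K_iset hh hx) (lie_D2_iset hh hx)
    (lie_P2_iset hh hx) (lie_H_iset hh hx) (fun β => i3_i2 (lie_R_iset hh β hx))
    (fun τ => i3_i2 (lie_Z_iset hh τ hx)) y

lemma lie_any_iset {x : A} (hx : Iset D2 P2 H R Z x) (y : A) : Iset D2 P2 H R Z ⁅y, x⁆ :=
  i2_iset (lie_any_i2 hh hx y)

lemma lie_any_i3 {x : A} (hx : I3set R Z x) (y : A) : I3set R Z ⁅y, x⁆ :=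
  expand hh (I3set R Z) (fun _ _ => i3set_add) (fun r _ => i3set_smul r) x
    (lie_P1_i3 hh hx) (lie_D1_i3 hh hx) (lie_K_i3 hh hx) (lie_D2_i3 hh hx)
    (lie_P2_i3 hh hx) (lie_H_i3 hh hx) (fun β => lie_R_i3 hh β hx)
    (fun τ => lie_Z_i3 hh τ hx) y

lemma lie_i2_i2 {x y : A} (hx : I2set P2 H R Z x) (hy : I2set P2 H R Z y) :
    I3set R Z ⁅x, y⁆ := by
  obtain ⟨b, c, α, σ, rfl⟩ := hx
  rw [add_lie, add_lie, add_lie, smul_lie, smul_lie]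
  exact i3set_add (i3set_add (i3set_add (i3set_smul b (lie_P2_i2 hh hy))
    (i3set_smul c (lie_H_i2 hh hy))) (lie_R_i2 hh α hy)) (lie_Z_i2 hh σ hy)

omit hh in
lemma rep_ext {x : A} {a b c a' b' c' : ℝ} (ha : a = a') (hb : b = b') (hc : c = c')
    (h : Rep P1 D1 K D2 P2 H R Z x a b c) : Rep P1 D1 K D2 P2 H R Z x a' b' c' := by
  subst ha; subst hb; subst hc; exact h

omit hh in
lemma rep_smul {x : A} {a b c : ℝ} (r : ℝ) (h : Rep P1 D1 K D2 P2 H R Z x a b c) :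
    Rep P1 D1 K D2 P2 H R Z (r • x) (r * a) (r * b) (r * c) := by
  obtain ⟨c4, c5, c6, α, σ, rfl⟩ := h
  exact ⟨r * c4, r * c5, r * c6, r • α, r • σ, by rw [map_smul, map_smul]; module⟩

omit hh in
lemma rep_P1 : Rep P1 D1 K D2 P2 H R Z P1 1 0 0 := ⟨0, 0, 0, 0, 0, by simp⟩

omit hh in
lemma rep_K : Rep P1 D1 K D2 P2 H R Z K 0 0 1 := ⟨0, 0, 0, 0, 0, by simp⟩

omit hh in
lemma rep_zero : Rep P1 D1 K D2 P2 H R Z (0 : A) 0 0 0 := ⟨0, 0, 0, 0, 0, by simp⟩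

omit hh in
lemma rep_iset {x : A} (h : Rep P1 D1 K D2 P2 H R Z x 0 0 0) : Iset D2 P2 H R Z x := by
  obtain ⟨c4, c5, c6, α, σ, rfl⟩ := h
  exact ⟨c4, c5, c6, α, σ, by module⟩

lemma exRep (x : A) : ∃ a b c, Rep P1 D1 K D2 P2 H R Z x a b c := by
  obtain ⟨v, hv⟩ := hh.basis.2 x
  exact ⟨v.1 0, v.1 1, v.1 2, v.1 3, v.1 4, v.1 5, v.2.1, v.2.2, hv.symm⟩

lemma repUniq {x : A} {a b c a' b' c' : ℝ} (h : Rep P1 D1 K D2 P2 H R Z x a b c)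
    (h' : Rep P1 D1 K D2 P2 H R Z x a' b' c') : a = a' ∧ b = b' ∧ c = c' := by
  obtain ⟨c4, c5, c6, α, σ, hx⟩ := h
  obtain ⟨d4, d5, d6, β, τ, hy⟩ := h'
  have e := hh.basis.1 (a₁ := (![a, b, c, c4, c5, c6], α, σ))
    (a₂ := (![a', b', c', d4, d5, d6], β, τ)) (hx.symm.trans hy)
  exact ⟨congrFun (congrArg Prod.fst e) 0, congrFun (congrArg Prod.fst e) 1,
    congrFun (congrArg Prod.fst e) 2⟩

lemma key (a b c a' b' c' : ℝ) :
    ⁅a • P1 + b • D1 + c • K, a' • P1 + b' • D1 + c' • K⁆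
      = (a * b' - b * a') • P1 + (2 * (a * c' - c * a')) • D1 + (b * c' - c * b') • K
        + (a * c' - c * a') • D2 := by
  have h1r : ⁅D1, P1⁆ = -P1 := by rw [← lie_skew, hh.h1]
  have h2r : ⁅K, P1⁆ = -((2 : ℝ) • D1 + D2) := by rw [← lie_skew, hh.h2]
  have h3r : ⁅K, D1⁆ = -K := by rw [← lie_skew, hh.h3]
  simp only [add_lie, lie_add, smul_lie, lie_smul, lie_self, hh.h1, hh.h2, hh.h3,
    h1r, h2r, h3r, smul_zero, smul_neg, smul_add, smul_smul]
  module

lemma repBracket {x y : A} {a b c a' b' c' : ℝ} (h : Rep P1 D1 K D2 P2 H R Z x a b c)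
    (h' : Rep P1 D1 K D2 P2 H R Z y a' b' c') :
    Rep P1 D1 K D2 P2 H R Z ⁅x, y⁆ (a * b' - b * a') (2 * (a * c' - c * a'))
      (b * c' - c * b') := by
  obtain ⟨c4, c5, c6, α, σ, hx⟩ := h
  obtain ⟨d4, d5, d6, β, τ, hy⟩ := h'
  have hi : Iset D2 P2 H R Z (c4 • D2 + c5 • P2 + c6 • H + R α + Z σ) :=
    ⟨c4, c5, c6, α, σ, rfl⟩
  have hi' : Iset D2 P2 H R Z (d4 • D2 + d5 • P2 + d6 • H + R β + Z τ) :=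
    ⟨d4, d5, d6, β, τ, rfl⟩
  have hx2 : x = (a • P1 + b • D1 + c • K) + (c4 • D2 + c5 • P2 + c6 • H + R α + Z σ) := by
    rw [hx]; module
  have hy2 : y = (a' • P1 + b' • D1 + c' • K) + (d4 • D2 + d5 • P2 + d6 • H + R β + Z τ) := by
    rw [hy]; module
  rw [hx2, hy2, add_lie,
    lie_add (a • P1 + b • D1 + c • K) (a' • P1 + b' • D1 + c' • K),
    lie_add (c4 • D2 + c5 • P2 + c6 • H + R α + Z σ) (a' • P1 + b' • D1 + c' • K)]
  have m1 : Iset D2 P2 H R Z ⁅a • P1 + b • D1 + c • K,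
      d4 • D2 + d5 • P2 + d6 • H + R β + Z τ⁆ := lie_any_iset hh hi' _
  have m2 : Iset D2 P2 H R Z ⁅c4 • D2 + c5 • P2 + c6 • H + R α + Z σ,
      a' • P1 + b' • D1 + c' • K⁆ := by
    rw [← lie_skew]; exact iset_neg (lie_any_iset hh hi _)
  have m3 : Iset D2 P2 H R Z ⁅c4 • D2 + c5 • P2 + c6 • H + R α + Z σ,
      d4 • D2 + d5 • P2 + d6 • H + R β + Z τ⁆ := lie_any_iset hh hi' _
  obtain ⟨e4, e5, e6, φ, ψ, hw⟩ := iset_add m1 (iset_add m2 m3)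
  refine ⟨(a * c' - c * a') + e4, e5, e6, φ, ψ, ?_⟩
  rw [key hh, add_assoc, hw]
  module

lemma solv_le (J : LieIdeal ℝ A) (hJ : LieAlgebra.IsSolvable J) {x : A} (hx : x ∈ J) :
    Iset D2 P2 H R Z x := by
  obtain ⟨a, b, c, hrep⟩ := exRep hh x
  suffices hz : a = 0 ∧ b = 0 ∧ c = 0 by
    obtain ⟨rfl, rfl, rfl⟩ := hz
    exact rep_iset hrep
  by_contra hne
  -- Step 1: produce an element of J with coordinates (1,0,0).
  have step1 : ∃ xe ∈ J, Rep P1 D1 K D2 P2 H R Z xe 1 0 0 := by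
    by_cases hc : c = 0
    · by_cases hb : b = 0
      · have ha : a ≠ 0 := fun ha => hne ⟨ha, hb, hc⟩
        refine ⟨a⁻¹ • x, SMulMemClass.smul_mem _ hx, ?_⟩
        exact rep_ext (by field_simp) (by rw [hb]; ring) (by rw [hc]; ring) (rep_smul a⁻¹ hrep)
      · refine ⟨b⁻¹ • ⁅P1, x⁆, SMulMemClass.smul_mem _ (J.lie_mem hx), ?_⟩
        have r1 := repBracket hh rep_P1 hrep
        exact rep_ext (by field_simp; ring) (by rw [hc]; ring) (by ring)
          (rep_smul b⁻¹ r1)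
    · refine ⟨(2 * c)⁻¹ • ⁅P1, ⁅P1, x⁆⁆, SMulMemClass.smul_mem _ (J.lie_mem (J.lie_mem hx)), ?_⟩
      have r1 := repBracket hh rep_P1 hrep
      have r2 := repBracket hh rep_P1 r1
      refine rep_ext ?_ (by ring) (by ring) (rep_smul (2 * c)⁻¹ r2)
      field_simp
      ring
  obtain ⟨xe, hxeJ, hxe⟩ := step1
  -- Step 2: build the sl2-triple representatives inside J.
  have hKxe : ⁅xe, K⁆ ∈ J := by
    rw [← lie_skew]; exact neg_mem (J.lie_mem hxeJ)
  have hxh : Rep P1 D1 K D2 P2 H R Z ((2 : ℝ)⁻¹ • ⁅xe, K⁆) 0 1 0 :=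
    rep_ext (by ring) (by norm_num) (by ring)
      (rep_smul (2 : ℝ)⁻¹ (repBracket hh hxe rep_K))
  have hxhJ : (2 : ℝ)⁻¹ • ⁅xe, K⁆ ∈ J := SMulMemClass.smul_mem _ hKxe
  have hxf : Rep P1 D1 K D2 P2 H R Z ⁅(2 : ℝ)⁻¹ • ⁅xe, K⁆, K⁆ 0 0 1 :=
    rep_ext (by ring) (by ring) (by ring) (repBracket hh hxh rep_K)
  have hxfJ : ⁅(2 : ℝ)⁻¹ • ⁅xe, K⁆, K⁆ ∈ J := by
    rw [← lie_skew]; exact neg_mem (J.lie_mem hxhJ)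
  -- Step 3: by induction the triple survives in every term of the derived series.
  have ind : ∀ k : ℕ, ∃ u v w : A,
      u ∈ LieAlgebra.derivedSeriesOfIdeal ℝ A k J ∧
      v ∈ LieAlgebra.derivedSeriesOfIdeal ℝ A k J ∧
      w ∈ LieAlgebra.derivedSeriesOfIdeal ℝ A k J ∧
      Rep P1 D1 K D2 P2 H R Z u 1 0 0 ∧ Rep P1 D1 K D2 P2 H R Z v 0 1 0 ∧
      Rep P1 D1 K D2 P2 H R Z w 0 0 1 := by
    intro k
    induction k with
    | zero =>
      refine ⟨xe, (2 : ℝ)⁻¹ • ⁅xe, K⁆, ⁅(2 : ℝ)⁻¹ • ⁅xe, K⁆, K⁆, ?_, ?_, ?_, hxe, hxh, hxf⟩ <;>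
        rw [LieAlgebra.derivedSeriesOfIdeal_zero]
      · exact hxeJ
      · exact hxhJ
      · exact hxfJ
    | succ k ih =>
      obtain ⟨u, v, w, hu, hv, hw, ru, rv, rw'⟩ := ih
      refine ⟨⁅u, v⁆, (2 : ℝ)⁻¹ • ⁅u, w⁆, ⁅v, w⁆, ?_, ?_, ?_, ?_, ?_, ?_⟩
      · rw [LieAlgebra.derivedSeriesOfIdeal_succ]; exact LieSubmodule.lie_mem_lie hu hv
      · rw [LieAlgebra.derivedSeriesOfIdeal_succ]
        exact SMulMemClass.smul_mem _ (LieSubmodule.lie_mem_lie hu hw)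
      · rw [LieAlgebra.derivedSeriesOfIdeal_succ]; exact LieSubmodule.lie_mem_lie hv hw
      · exact rep_ext (by ring) (by ring) (by ring) (repBracket hh ru rv)
      · exact rep_ext (by ring) (by norm_num) (by ring)
          (rep_smul (2 : ℝ)⁻¹ (repBracket hh ru rw'))
      · exact rep_ext (by ring) (by ring) (by ring) (repBracket hh rv rw')
  obtain ⟨k, hk⟩ := (LieAlgebra.isSolvable_iff ℝ J).mp hJ
  rw [LieIdeal.derivedSeries_eq_bot_iff] at hk
  obtain ⟨u, v, w, hu, -, -, ru, -, -⟩ := ind k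
  rw [hk, LieSubmodule.mem_bot] at hu
  rw [hu] at ru
  exact one_ne_zero (repUniq hh ru rep_zero).1
end St6Aux

open St6Aux

/-- Let `𝔞` be the real Lie algebra with underlying vector space
`ℝ⁶ ⊕ S ⊕ S`, a general element being `c₁P¹ + c₂D¹ + c₃K + c₄D² + c₅P² + c₆H + R(α) + Z(σ)`,
with the indicated commutation relations (all unlisted brackets of generators vanishing).
Then the radical of `𝔞` (the supremum of all solvable Lie ideals, `LieAlgebra.radical`)
equals `𝔯 = {c₁ = c₂ = c₃ = 0}`, i.e. the span of `D²`, `P²`, `H` and all `R(α)`, `Z(σ)`. -/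
theorem statement6 {A : Type*} [LieRing A] [LieAlgebra ℝ A]
    (P1 D1 K D2 P2 H : A) (R Z : SmoothFn →ₗ[ℝ] A)
    (hbasis : Function.Bijective (fun v : (Fin 6 → ℝ) × SmoothFn × SmoothFn =>
      v.1 0 • P1 + v.1 1 • D1 + v.1 2 • K + v.1 3 • D2 + v.1 4 • P2 + v.1 5 • H
        + R v.2.1 + Z v.2.2))
    (h1 : ⁅P1, D1⁆ = P1)
    (h2 : ⁅P1, K⁆ = (2 : ℝ) • D1 + D2)
    (h3 : ⁅D1, K⁆ = K)
    (h4 : ⁅P1, H⁆ = P2)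
    (h5 : ∀ α, ⁅P1, R α⁆ = R (sder α))
    (h6 : ∀ σ, ⁅P1, Z σ⁆ = Z (sder σ))
    (h7 : ⁅D1, H⁆ = H)
    (h8 : ∀ α, ⁅D1, R α⁆ = R (xmul (sder α) + α))
    (h9 : ∀ σ, ⁅D1, Z σ⁆ = Z (xmul (sder σ) + σ))
    (h10 : ⁅K, P2⁆ = -H)
    (h11 : ∀ α, ⁅K, R α⁆ = R (xmul (xmul (sder α))))
    (h12 : ∀ σ, ⁅K, Z σ⁆ = Z (xmul (xmul (sder σ)) - xmul σ))
    (h13 : ⁅D2, P2⁆ = -P2)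
    (h14 : ⁅D2, H⁆ = -H)
    (h15 : ∀ α, ⁅D2, R α⁆ = (-2 : ℝ) • R α)
    (h16 : ∀ σ, ⁅D2, Z σ⁆ = (-3 : ℝ) • Z σ)
    (h17 : ⁅P2, H⁆ = R oneS)
    (h18 : ∀ α, ⁅P2, R α⁆ = Z α)
    (h19 : ∀ α, ⁅H, R α⁆ = Z (xmul α))
    (z1 : ⁅P1, D2⁆ = 0) (z2 : ⁅P1, P2⁆ = 0)
    (z3 : ⁅D1, D2⁆ = 0) (z4 : ⁅D1, P2⁆ = 0)
    (z5 : ⁅K, D2⁆ = 0) (z6 : ⁅K, H⁆ = 0)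
    (z7 : ∀ σ, ⁅P2, Z σ⁆ = 0) (z8 : ∀ σ, ⁅H, Z σ⁆ = 0)
    (z9 : ∀ α β, ⁅R α, R β⁆ = 0) (z10 : ∀ α σ, ⁅R α, Z σ⁆ = 0)
    (z11 : ∀ σ τ, ⁅Z σ, Z τ⁆ = 0) :
    ∀ x : A, x ∈ LieAlgebra.radical ℝ A ↔
      ∃ (c₄ c₅ c₆ : ℝ) (α σ : SmoothFn),
        x = c₄ • D2 + c₅ • P2 + c₆ • H + R α + Z σ := by
  have hh : Hyp P1 D1 K D2 P2 H R Z :=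
    ⟨hbasis, h1, h2, h3, h4, h5, h6, h7, h8, h9, h10, h11, h12, h13, h14, h15, h16, h17, h18,
      h19, z1, z2, z3, z4, z5, z6, z7, z8, z9, z10, z11⟩
  let Isub : LieIdeal ℝ A :=
    { carrier := {x | Iset D2 P2 H R Z x}
      add_mem' := fun hu hv => iset_add hu hv
      zero_mem' := ⟨0, 0, 0, 0, 0, by simp⟩
      smul_mem' := fun r u hu => iset_smul r hu
      lie_mem := fun {y x} hx => lie_any_iset hh hx y }
  let I2sub : LieIdeal ℝ A :=
    { carrier := {x | I2set P2 H R Z x}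
      add_mem' := fun hu hv => i2set_add hu hv
      zero_mem' := ⟨0, 0, 0, 0, by simp⟩
      smul_mem' := fun r u hu => i2set_smul r hu
      lie_mem := fun {y x} hx => lie_any_i2 hh (i2_iset hx) y }
  let I3sub : LieIdeal ℝ A :=
    { carrier := {x | I3set R Z x}
      add_mem' := fun hu hv => i3set_add hu hv
      zero_mem' := ⟨0, 0, by simp⟩
      smul_mem' := fun r u hu => i3set_smul r hu
      lie_mem := fun {y x} hx => lie_any_i3 hh hx y }
  have hsolv : LieAlgebra.IsSolvable Isub := by
    refine (LieAlgebra.isSolvable_iff ℝ Isub).mpr ⟨3, (LieIdeal.derivedSeries_eq_bot_iff _ _).mpr ?_⟩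
    have s1 : LieAlgebra.derivedSeriesOfIdeal ℝ A 1 Isub ≤ I2sub := by
      rw [show (1 : ℕ) = 0 + 1 from rfl, LieAlgebra.derivedSeriesOfIdeal_succ,
        LieAlgebra.derivedSeriesOfIdeal_zero, LieSubmodule.lie_le_iff]
      intro x _ m hm
      exact lie_any_i2 hh hm x
    have s2 : LieAlgebra.derivedSeriesOfIdeal ℝ A 2 Isub ≤ I3sub := by
      rw [show (2 : ℕ) = 1 + 1 from rfl, LieAlgebra.derivedSeriesOfIdeal_succ]
      refine le_trans (LieSubmodule.mono_lie s1 s1) ?_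
      rw [LieSubmodule.lie_le_iff]
      intro x hx m hm
      exact lie_i2_i2 hh hx hm
    rw [show (3 : ℕ) = 2 + 1 from rfl, LieAlgebra.derivedSeriesOfIdeal_succ]
    refine le_bot_iff.mp (le_trans (LieSubmodule.mono_lie s2 s2) ?_)
    rw [LieSubmodule.lie_le_iff]
    intro x hx m hm
    have h0 := lie_i3_i3 hh hx hm
    rw [h0]
    exact zero_mem _
  have hrad : LieAlgebra.radical ℝ A = Isub := by
    apply le_antisymm
    · refine sSup_le ?_
      intro J hJ
      intro x hxJ
      exact solv_le hh J hJ hxJ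
    · exact le_sSup hsolv
  intro x
  rw [hrad]
  exact Iff.rfl
end
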